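/- arXiv:cs/0406020 — 4 statements merged into one kernel-verified Lean document; each statement's English description precedes it below -/
import Mathlib

section
/- If G is a partial cube with isometric dimension τ, then the lattice dimension of G equals τ − |M|, where M is any maximum matching in the semicube graph Sc(G). -/
open Finset

section Helpers

private lemma sum_nat_eq_one {α : Type*} [Fintype α] {f : α → ℕ}
    (h : ∑ k, f k = 1) : ∃ j, f j = 1 ∧ ∀ k, k ≠ j → f k = 0 := by
  have hex : ∃ j, f j ≠ 0 := by
    by_contra hc
    push_neg at hc
    simp [hc] at h
  classical
  obtain ⟨j, hj⟩ := hex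
  have h1 : f j ≤ 1 := h ▸ Finset.single_le_sum (fun k _ => Nat.zero_le _) (mem_univ j)
  refine ⟨j, by omega, fun k hk => ?_⟩
  have hsub : ({j, k} : Finset α) ⊆ univ := subset_univ _
  have := Finset.sum_le_sum_of_subset (f := f) hsub
  rw [Finset.sum_pair (by exact fun he => hk he.symm)] at this
  omega

private lemma iter_stabilize {α : Type*} (f : α → α) (m : α → ℕ) (B : ℕ)
    (hb : ∀ x, m x ≤ B) (hd : ∀ x, f x ≠ x → m x < m (f x)) (x : α) :
    f (f^[B] x) = f^[B] x := by
  by_contra h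
  have all_nonfix : ∀ k, k ≤ B → f (f^[k] x) ≠ f^[k] x := by
    intro k hk hfix
    apply h
    have hBk : f^[B] x = f^[k] x := by
      conv_lhs => rw [show B = (B - k) + k by omega]
      rw [Function.iterate_add_apply]
      exact Function.iterate_fixed hfix (B - k)
    rw [hBk]
    exact hfix
  have key : ∀ k, k ≤ B + 1 → k ≤ m (f^[k] x) := by
    intro k
    induction k with
    | zero => intro _; exact Nat.zero_le _
    | succ n ih =>
      intro hk
      have h1 : n ≤ m (f^[n] x) := ih (by omega)
      have h2 := hd _ (all_nonfix n (by omega))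
      rw [Function.iterate_succ_apply']
      omega
  have := key (B + 1) le_rfl
  have := hb (f^[B + 1] x)
  omega

/-- fixed points persist under iteration, applied form -/
private lemma iter_fix_of_fix {α : Type*} {f : α → α} {x : α} (h : f x = x) (n : ℕ) :
    f^[n] x = x := Function.iterate_fixed h n

end Helpers

open Finset

attribute [local instance] Classical.propDecidable

section Partner
variable {α : Type*} {H : SimpleGraph α} {M : H.Subgraph}

noncomputable def mpartner (M : H.Subgraph) (hM : M.IsMatching) (s : α) : α :=
  if h : s ∈ M.verts then (hM h).choose else s

lemma mpartner_adj (hM : M.IsMatching) {s : α} (hs : s ∈ M.verts) :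
    M.Adj s (mpartner M hM s) := by
  rw [mpartner, dif_pos hs]; exact (hM hs).choose_spec.1

lemma mpartner_eq_of_adj (hM : M.IsMatching) {s w : α} (h : M.Adj s w) :
    mpartner M hM s = w := by
  have hs : s ∈ M.verts := M.edge_vert h
  rw [mpartner, dif_pos hs]
  exact ((hM hs).choose_spec.2 w h).symm

lemma mpartner_mem (hM : M.IsMatching) {s : α} (hs : s ∈ M.verts) :
    mpartner M hM s ∈ M.verts := M.edge_vert (mpartner_adj hM hs).symm

lemma mpartner_invol (hM : M.IsMatching) {s : α} (hs : s ∈ M.verts) :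
    mpartner M hM (mpartner M hM s) = s :=
  mpartner_eq_of_adj hM (mpartner_adj hM hs).symm

end Partner

section Chains

variable {V : Type*} [Fintype V] {τ : ℕ}

def smF (μ : V → Fin τ → Bool) (s : Fin τ × Bool) : Finset V :=
  univ.filter (fun v => μ v s.1 = s.2)

def scmp {τ : ℕ} (s : Fin τ × Bool) : Fin τ × Bool := (s.1, !s.2)

variable {μ : V → Fin τ → Bool} {Sc : SimpleGraph (Fin τ × Bool)} {M : Sc.Subgraph}

lemma mem_smF {v : V} {s : Fin τ × Bool} : v ∈ smF μ s ↔ μ v s.1 = s.2 := by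
  simp [smF]

@[simp] lemma scmp_scmp (s : Fin τ × Bool) : scmp (scmp s) = s := by simp [scmp]

@[simp] lemma cmp_fst (s : Fin τ × Bool) : (scmp s).1 = s.1 := rfl

lemma mem_smF_scmp {v : V} {s : Fin τ × Bool} : v ∈ smF μ (scmp s) ↔ v ∉ smF μ s := by
  simp only [smF, scmp, mem_filter, mem_univ, true_and]
  rcases s with ⟨i, b⟩
  cases h : μ v i <;> cases b <;> simp [h]

lemma smF_nonempty (hsurj : ∀ (i : Fin τ) (b : Bool), ∃ v : V, μ v i = b)
    (s : Fin τ × Bool) : (smF μ s).Nonempty := by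
  obtain ⟨v, hv⟩ := hsurj s.1 s.2
  exact ⟨v, mem_smF.2 hv⟩

/-- the hypothesis on the semicube graph, as in the theorem statement -/
def ScHyp (μ : V → Fin τ → Bool) (Sc : SimpleGraph (Fin τ × Bool)) : Prop :=
  ∀ s t : Fin τ × Bool, Sc.Adj s t ↔ s ≠ t ∧
    {v : V | μ v s.1 = s.2} ∪ {v : V | μ v t.1 = t.2} = Set.univ ∧
    ({v : V | μ v s.1 = s.2} ∩ {v : V | μ v t.1 = t.2}).Nonempty

lemma madj_cover (hSc : ScHyp μ Sc) {a b : Fin τ × Bool} (hab : M.Adj a b) (v : V) :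
    v ∈ smF μ a ∨ v ∈ smF μ b := by
  have h := ((hSc a b).1 (M.adj_sub hab)).2.1
  have hv : v ∈ ({w : V | μ w a.1 = a.2} ∪ {w : V | μ w b.1 = b.2}) := h ▸ Set.mem_univ v
  rcases hv with h | h
  · exact Or.inl (mem_smF.2 h)
  · exact Or.inr (mem_smF.2 h)

lemma madj_inter (hSc : ScHyp μ Sc) {a b : Fin τ × Bool} (hab : M.Adj a b) :
    ∃ v : V, v ∈ smF μ a ∧ v ∈ smF μ b := by
  obtain ⟨v, hv1, hv2⟩ := ((hSc a b).1 (M.adj_sub hab)).2.2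
  exact ⟨v, mem_smF.2 hv1, mem_smF.2 hv2⟩

lemma madj_not_cmp (hSc : ScHyp μ Sc) {a : Fin τ × Bool} :
    ¬ M.Adj a (scmp a) := by
  intro h
  obtain ⟨v, hv1, hv2⟩ := madj_inter hSc h
  exact (mem_smF_scmp.1 hv2) hv1

noncomputable def psucc (M : Sc.Subgraph) (hM : M.IsMatching) (s : Fin τ × Bool) :
    Fin τ × Bool :=
  if scmp s ∈ M.verts then mpartner M hM (scmp s) else s

noncomputable def ppred (M : Sc.Subgraph) (hM : M.IsMatching) (s : Fin τ × Bool) :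
    Fin τ × Bool :=
  if s ∈ M.verts then scmp (mpartner M hM s) else s

variable {hM : M.IsMatching}

lemma psucc_fix_iff (hSc : ScHyp μ Sc) {s : Fin τ × Bool} :
    psucc M hM s = s ↔ scmp s ∉ M.verts := by
  constructor
  · intro h hmem
    rw [psucc, if_pos hmem] at h
    have := mpartner_adj hM hmem
    rw [h] at this
    exact madj_not_cmp (M := M) hSc (a := s) this.symm
  · intro h; rw [psucc, if_neg h]

lemma ppred_fix_iff (hSc : ScHyp μ Sc) {s : Fin τ × Bool} :
    ppred M hM s = s ↔ s ∉ M.verts := by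
  constructor
  · intro h hmem
    rw [ppred, if_pos hmem] at h
    have h2 : mpartner M hM s = scmp s := by
      have := congrArg scmp h; rwa [scmp_scmp] at this
    have := mpartner_adj hM hmem
    rw [h2] at this
    exact madj_not_cmp (M := M) hSc this
  · intro h; rw [ppred, if_neg h]

lemma psucc_mem_of_ne (hSc : ScHyp μ Sc) {s : Fin τ × Bool} (h : psucc M hM s ≠ s) :
    scmp s ∈ M.verts := by
  by_contra hc; exact h ((psucc_fix_iff hSc).2 hc)

lemma ppred_mem_of_ne (hSc : ScHyp μ Sc) {s : Fin τ × Bool} (h : ppred M hM s ≠ s) :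
    s ∈ M.verts := by
  by_contra hc; exact h ((ppred_fix_iff hSc).2 hc)

lemma psucc_adj {s : Fin τ × Bool} (h : scmp s ∈ M.verts) :
    M.Adj (scmp s) (psucc M hM s) := by
  rw [psucc, if_pos h]; exact mpartner_adj hM h

lemma ppred_psucc (hM : M.IsMatching) {s : Fin τ × Bool} (h : scmp s ∈ M.verts) :
    ppred M hM (psucc M hM s) = s := by
  rw [psucc, if_pos h]
  have hmem : mpartner M hM (scmp s) ∈ M.verts := mpartner_mem hM h
  rw [ppred, if_pos hmem, mpartner_invol hM h, scmp_scmp]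

lemma psucc_ppred (hM : M.IsMatching) {s : Fin τ × Bool} (h : s ∈ M.verts) :
    psucc M hM (ppred M hM s) = s := by
  rw [ppred, if_pos h]
  have hmem : mpartner M hM s ∈ M.verts := mpartner_mem hM h
  rw [psucc, if_pos (by rwa [scmp_scmp]), scmp_scmp, mpartner_invol hM h]

lemma smF_subset_psucc (hSc : ScHyp μ Sc) (s : Fin τ × Bool) :
    smF μ s ⊆ smF μ (psucc M hM s) := by
  by_cases h : scmp s ∈ M.verts
  · intro v hv
    rcases madj_cover hSc (psucc_adj h) v with h1 | h1
    · exact absurd hv (mem_smF_scmp.1 h1)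
    · exact h1
  · rw [psucc, if_neg h]

lemma card_lt_psucc (hSc : ScHyp μ Sc) {s : Fin τ × Bool} (h : psucc M hM s ≠ s) :
    (smF μ s).card < (smF μ (psucc M hM s)).card := by
  have hmem := psucc_mem_of_ne hSc h
  obtain ⟨v, hv1, hv2⟩ := madj_inter hSc (psucc_adj (hM := hM) hmem)
  apply Finset.card_lt_card
  refine ⟨smF_subset_psucc hSc s, fun hsub => ?_⟩
  exact (mem_smF_scmp.1 hv1) (hsub hv2)

lemma card_lt_ppred (hSc : ScHyp μ Sc) {s : Fin τ × Bool} (h : ppred M hM s ≠ s) :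
    (smF μ (ppred M hM s)).card < (smF μ s).card := by
  have hmem := ppred_mem_of_ne hSc h
  have h2 : psucc M hM (ppred M hM s) = s := psucc_ppred hM hmem
  have h3 : psucc M hM (ppred M hM s) ≠ ppred M hM s := by rw [h2]; exact fun hh => h hh.symm
  have := card_lt_psucc (hM := hM) hSc h3
  rwa [h2] at this

end Chains

section Iter

variable {V : Type*} [Fintype V] {τ : ℕ}
variable {μ : V → Fin τ → Bool} {Sc : SimpleGraph (Fin τ × Bool)} {M : Sc.Subgraph}
variable {hM : M.IsMatching}

private lemma iter_stab_ge {α : Type*} {f : α → α} {m : α → ℕ} {B : ℕ}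
    (hb : ∀ x, m x ≤ B) (hd : ∀ x, f x ≠ x → m x < m (f x)) (x : α) {n : ℕ}
    (hn : B ≤ n) : f^[n] x = f^[B] x := by
  have hfix := iter_stabilize f m B hb hd x
  conv_lhs => rw [show n = (n - B) + B by omega, Function.iterate_add_apply]
  exact Function.iterate_fixed hfix _

lemma smF_card_le (s : Fin τ × Bool) : (smF μ s).card ≤ Fintype.card V :=
  Finset.card_le_univ _

lemma psucc_stab (hSc : ScHyp μ Sc) (x : Fin τ × Bool) {n : ℕ}
    (hn : Fintype.card V ≤ n) :
    (psucc M hM)^[n] x = (psucc M hM)^[Fintype.card V] x := by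
  refine iter_stab_ge (m := fun s => (smF μ s).card) ?_ ?_ x hn
  · intro y; exact smF_card_le y
  · intro y hy
    exact card_lt_psucc (hM := hM) hSc hy

lemma ppred_stab (hSc : ScHyp μ Sc) (hsurj : ∀ (i : Fin τ) (b : Bool), ∃ v : V, μ v i = b)
    (x : Fin τ × Bool) {n : ℕ} (hn : Fintype.card V - 1 ≤ n) :
    (ppred M hM)^[n] x = (ppred M hM)^[Fintype.card V - 1] x := by
  refine iter_stab_ge (m := fun s => Fintype.card V - (smF μ s).card) ?_ ?_ x hn
  · intro y
    have := (smF_nonempty hsurj y).card_pos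
    omega
  · intro y hy
    have h1 := card_lt_ppred (hM := hM) hSc hy
    have h2 := smF_card_le (μ := μ) y
    omega

lemma psucc_fix_at (hSc : ScHyp μ Sc) (x : Fin τ × Bool) {n : ℕ}
    (hn : Fintype.card V ≤ n) :
    psucc M hM ((psucc M hM)^[n] x) = (psucc M hM)^[n] x := by
  rw [show psucc M hM ((psucc M hM)^[n] x) = (psucc M hM)^[n+1] x from
    (Function.iterate_succ_apply' _ _ _).symm]
  rw [psucc_stab hSc x (n := n + 1) (by omega), psucc_stab hSc x hn]

lemma ppred_fix_at (hSc : ScHyp μ Sc) (hsurj : ∀ (i : Fin τ) (b : Bool), ∃ v : V, μ v i = b)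
    (x : Fin τ × Bool) {n : ℕ} (hn : Fintype.card V - 1 ≤ n) :
    ppred M hM ((ppred M hM)^[n] x) = (ppred M hM)^[n] x := by
  rw [show ppred M hM ((ppred M hM)^[n] x) = (ppred M hM)^[n+1] x from
    (Function.iterate_succ_apply' _ _ _).symm]
  rw [ppred_stab hSc hsurj x (n := n + 1) (by omega), ppred_stab hSc hsurj x hn]

noncomputable def rootOf (μ : V → Fin τ → Bool) (M : Sc.Subgraph) (hM : M.IsMatching)
    (s : Fin τ × Bool) : Fin τ × Bool := (ppred M hM)^[Fintype.card V] s

noncomputable def chainF (μ : V → Fin τ → Bool) (M : Sc.Subgraph) (hM : M.IsMatching)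
    (r : Fin τ × Bool) : Finset (Fin τ × Bool) :=
  (range (Fintype.card V + 1)).image (fun n => (psucc M hM)^[n] r)

noncomputable def pairR (μ : V → Fin τ → Bool) (M : Sc.Subgraph) (hM : M.IsMatching)
    (r : Fin τ × Bool) : Fin τ × Bool := scmp ((psucc M hM)^[Fintype.card V] r)

lemma root_fix (hSc : ScHyp μ Sc) (hsurj : ∀ (i : Fin τ) (b : Bool), ∃ v : V, μ v i = b)
    (s : Fin τ × Bool) : ppred M hM (rootOf μ M hM s) = rootOf μ M hM s :=
  ppred_fix_at hSc hsurj s (by omega)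

lemma root_not_mem (hSc : ScHyp μ Sc) (hsurj : ∀ (i : Fin τ) (b : Bool), ∃ v : V, μ v i = b)
    (s : Fin τ × Bool) : rootOf μ M hM s ∉ M.verts :=
  (ppred_fix_iff hSc).1 (root_fix hSc hsurj s)

lemma rootOf_eq_self {r : Fin τ × Bool} (hr : ppred M hM r = r) : rootOf μ M hM r = r :=
  Function.iterate_fixed hr _

lemma root_psucc (hSc : ScHyp μ Sc) (hsurj : ∀ (i : Fin τ) (b : Bool), ∃ v : V, μ v i = b)
    (hV : 0 < Fintype.card V) (s : Fin τ × Bool) :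
    rootOf μ M hM (psucc M hM s) = rootOf μ M hM s := by
  by_cases h : psucc M hM s = s
  · rw [h]
  · have hmem := psucc_mem_of_ne hSc h
    rw [rootOf, rootOf, show Fintype.card V = (Fintype.card V - 1) + 1 by omega,
      Function.iterate_succ_apply, ppred_psucc hM hmem]
    rw [ppred_stab hSc hsurj s (n := Fintype.card V - 1) le_rfl,
      ppred_stab hSc hsurj s (n := Fintype.card V - 1 + 1) (by omega)]

lemma root_iter_psucc (hSc : ScHyp μ Sc) (hsurj : ∀ (i : Fin τ) (b : Bool), ∃ v : V, μ v i = b)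
    (hV : 0 < Fintype.card V) (s : Fin τ × Bool) (n : ℕ) :
    rootOf μ M hM ((psucc M hM)^[n] s) = rootOf μ M hM s := by
  induction n with
  | zero => rfl
  | succ k ih => rw [Function.iterate_succ_apply', root_psucc hSc hsurj hV, ih]

lemma chain_mem_iter (hSc : ScHyp μ Sc) (r : Fin τ × Bool) (n : ℕ) :
    (psucc M hM)^[n] r ∈ chainF μ M hM r := by
  by_cases hn : n ≤ Fintype.card V
  · exact Finset.mem_image.2 ⟨n, Finset.mem_range.2 (by omega), rfl⟩
  · rw [psucc_stab hSc r (n := n) (by omega)]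
    exact Finset.mem_image.2 ⟨Fintype.card V, Finset.mem_range.2 (by omega), rfl⟩

lemma root_of_chain (hSc : ScHyp μ Sc) (hsurj : ∀ (i : Fin τ) (b : Bool), ∃ v : V, μ v i = b)
    (hV : 0 < Fintype.card V) {r s : Fin τ × Bool} (hr : r ∉ M.verts)
    (hs : s ∈ chainF μ M hM r) : rootOf μ M hM s = r := by
  obtain ⟨n, -, rfl⟩ := Finset.mem_image.1 hs
  rw [root_iter_psucc hSc hsurj hV]
  exact rootOf_eq_self ((ppred_fix_iff hSc).2 hr)

lemma mem_chain_root (hSc : ScHyp μ Sc) (s : Fin τ × Bool) :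
    s ∈ chainF μ M hM (rootOf μ M hM s) := by
  have key : ∀ m : ℕ, ∃ n, (psucc M hM)^[n] ((ppred M hM)^[m] s) = s := by
    intro m
    induction m with
    | zero => exact ⟨0, rfl⟩
    | succ k ih =>
      obtain ⟨n, hn⟩ := ih
      rw [Function.iterate_succ_apply']
      by_cases h : ppred M hM ((ppred M hM)^[k] s) = (ppred M hM)^[k] s
      · exact ⟨n, by rw [h, hn]⟩
      · have hmem := ppred_mem_of_ne hSc h
        refine ⟨n + 1, ?_⟩
        rw [Function.iterate_succ_apply, psucc_ppred hM hmem, hn]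
  obtain ⟨n, hn⟩ := key (Fintype.card V)
  have := chain_mem_iter (hM := hM) (μ := μ) hSc (rootOf μ M hM s) n
  rw [rootOf] at this
  rwa [hn] at this

lemma chain_subset_mono (hSc : ScHyp μ Sc) (r : Fin τ × Bool) {n n' : ℕ} (h : n ≤ n') :
    smF μ ((psucc M hM)^[n] r) ⊆ smF μ ((psucc M hM)^[n'] r) := by
  have key : ∀ k, smF μ ((psucc M hM)^[n] r) ⊆ smF μ ((psucc M hM)^[k + n] r) := by
    intro k
    induction k with
    | zero => rw [Nat.zero_add]
    | succ m ih =>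
      rw [show m + 1 + n = (m + n) + 1 by omega, Function.iterate_succ_apply']
      exact ih.trans (smF_subset_psucc hSc _)
  have := key (n' - n)
  rwa [show n' - n + n = n' by omega] at this

lemma chain_comparable (hSc : ScHyp μ Sc) {r s t : Fin τ × Bool}
    (hs : s ∈ chainF μ M hM r) (ht : t ∈ chainF μ M hM r) :
    smF μ s ⊆ smF μ t ∨ smF μ t ⊆ smF μ s := by
  obtain ⟨n, -, rfl⟩ := Finset.mem_image.1 hs
  obtain ⟨m, -, rfl⟩ := Finset.mem_image.1 ht
  rcases le_total n m with h | h
  · exact Or.inl (chain_subset_mono hSc r h)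
  · exact Or.inr (chain_subset_mono hSc r h)

lemma psucc_scmp_psucc (hSc : ScHyp μ Sc) {s : Fin τ × Bool} (h : psucc M hM s ≠ s) :
    psucc M hM (scmp (psucc M hM s)) = scmp s := by
  have hmem := psucc_mem_of_ne hSc h
  have h1 : psucc M hM s = mpartner M hM (scmp s) := by rw [psucc, if_pos hmem]
  have h2 : psucc M hM s ∈ M.verts := by rw [h1]; exact mpartner_mem hM hmem
  rw [psucc, scmp_scmp, if_pos h2, h1, mpartner_invol hM hmem]

lemma rev_chain (hSc : ScHyp μ Sc) {r : Fin τ × Bool} (hr : r ∉ M.verts) (n : ℕ) :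
    (psucc M hM)^[n] (scmp ((psucc M hM)^[n] r)) = scmp r := by
  induction n with
  | zero => rfl
  | succ k ih =>
    rw [show (psucc M hM)^[k+1] r = psucc M hM ((psucc M hM)^[k] r) from
      Function.iterate_succ_apply' _ _ _]
    by_cases h : psucc M hM ((psucc M hM)^[k] r) = (psucc M hM)^[k] r
    · rw [h, Function.iterate_succ_apply', ih]
      rw [psucc_fix_iff hSc, scmp_scmp]
      exact hr
    · rw [Function.iterate_succ_apply, psucc_scmp_psucc hSc h, ih]

lemma pairR_not_mem (hSc : ScHyp μ Sc) (r : Fin τ × Bool) :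
    pairR μ M hM r ∉ M.verts := by
  rw [pairR]
  exact (psucc_fix_iff hSc).1 (psucc_fix_at hSc r le_rfl)

lemma pair_pair (hSc : ScHyp μ Sc) {r : Fin τ × Bool} (hr : r ∉ M.verts) :
    pairR μ M hM (pairR μ M hM r) = r := by
  rw [pairR, pairR, rev_chain hSc hr, scmp_scmp]

lemma scmp_mem_chain (hSc : ScHyp μ Sc) (hsurj : ∀ (i : Fin τ) (b : Bool), ∃ v : V, μ v i = b)
    (hV : 0 < Fintype.card V) {r s : Fin τ × Bool} (hr : r ∉ M.verts)
    (hs : s ∈ chainF μ M hM r) : scmp s ∈ chainF μ M hM (pairR μ M hM r) := by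
  obtain ⟨n, -, rfl⟩ := Finset.mem_image.1 hs
  have h1 : (psucc M hM)^[n] (scmp ((psucc M hM)^[n] r)) = scmp r := rev_chain hSc hr n
  have h2 : (psucc M hM)^[Fintype.card V] (pairR μ M hM r) = scmp r := by
    rw [pairR]; exact rev_chain hSc hr _
  have h3 : rootOf μ M hM (scmp ((psucc M hM)^[n] r)) = rootOf μ M hM (scmp r) := by
    rw [← root_iter_psucc hSc hsurj hV (scmp ((psucc M hM)^[n] r)) n, h1]
  have h4 : rootOf μ M hM (scmp r) = pairR μ M hM r := by
    rw [← h2, root_iter_psucc hSc hsurj hV]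
    exact rootOf_eq_self ((ppred_fix_iff hSc).2 (pairR_not_mem hSc r))
  have := mem_chain_root (hM := hM) (μ := μ) hSc (scmp ((psucc M hM)^[n] r))
  rwa [h3, h4] at this

lemma not_scmp_mem_chain (hSc : ScHyp μ Sc)
    (hsurj : ∀ (i : Fin τ) (b : Bool), ∃ v : V, μ v i = b)
    {r s : Fin τ × Bool} (hs : s ∈ chainF μ M hM r) : scmp s ∉ chainF μ M hM r := by
  intro hc
  rcases chain_comparable hSc hs hc with h | h
  · obtain ⟨v, hv⟩ := smF_nonempty hsurj s
    exact mem_smF_scmp.1 (h hv) hv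
  · obtain ⟨v, hv⟩ := smF_nonempty hsurj (scmp s)
    exact mem_smF_scmp.1 hv (h hv)

lemma pair_ne (hSc : ScHyp μ Sc) (hsurj : ∀ (i : Fin τ) (b : Bool), ∃ v : V, μ v i = b)
    (r : Fin τ × Bool) : pairR μ M hM r ≠ r := by
  intro he
  have h1 : (psucc M hM)^[Fintype.card V] r ∈ chainF μ M hM r := chain_mem_iter hSc r _
  apply not_scmp_mem_chain hSc hsurj h1
  show pairR μ M hM r ∈ chainF μ M hM r
  rw [he]
  exact Finset.mem_image.2 ⟨0, Finset.mem_range.2 (by omega), rfl⟩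

end Iter

section Count

variable {V : Type*} [Fintype V] {τ : ℕ}
variable {μ : V → Fin τ → Bool} {Sc : SimpleGraph (Fin τ × Bool)} {M : Sc.Subgraph}
variable {hM : M.IsMatching}

private lemma bool_resolve {a b c : Bool} (h : a ≠ b) (h2 : a ≠ c) : b = c := by
  cases a <;> cases b <;> cases c <;> simp_all

lemma matching_verts_ncard {α : Type*} [Fintype α] {H : SimpleGraph α} {M : H.Subgraph}
    (hM : M.IsMatching) : M.verts.ncard = 2 * M.edgeSet.ncard := by
  classical
  rw [Set.ncard_eq_toFinset_card' M.verts, Set.ncard_eq_toFinset_card' M.edgeSet]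
  have hmaps : ∀ v ∈ M.verts.toFinset,
      (s(v, mpartner M hM v) : Sym2 α) ∈ M.edgeSet.toFinset := by
    intro v hv
    rw [Set.mem_toFinset] at hv ⊢
    exact SimpleGraph.Subgraph.mem_edgeSet.2 (mpartner_adj hM hv)
  rw [Finset.card_eq_sum_card_fiberwise hmaps]
  rw [Finset.sum_congr rfl (g := fun _ => 2) ?_, Finset.sum_const, smul_eq_mul, mul_comm]
  intro e he
  induction e with
  | _ a b =>
    rw [Set.mem_toFinset] at he
    have hadj : M.Adj a b := SimpleGraph.Subgraph.mem_edgeSet.1 he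
    have hne : a ≠ b := H.ne_of_adj (M.adj_sub hadj)
    have heq : (M.verts.toFinset.filter fun v => (s(v, mpartner M hM v) : Sym2 α) = s(a, b))
        = {a, b} := by
      ext v
      rw [Finset.mem_filter, Set.mem_toFinset, Finset.mem_insert, Finset.mem_singleton]
      constructor
      · rintro ⟨hv, heq⟩
        rcases Sym2.eq_iff.1 heq with ⟨h1, -⟩ | ⟨h1, -⟩
        · exact Or.inl h1
        · exact Or.inr h1
      · rintro (rfl | rfl)
        · exact ⟨M.edge_vert hadj, by rw [mpartner_eq_of_adj hM hadj]⟩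
        · exact ⟨M.edge_vert hadj.symm,
            by rw [mpartner_eq_of_adj hM hadj.symm]; exact Sym2.eq_swap⟩
    rw [heq, Finset.card_pair hne]

private lemma sdiff_filter_eq {C : Finset (Fin τ × Bool)} {u v : V}
    (hsub : C.filter (fun s => μ u s.1 = s.2) ⊆ C.filter (fun s => μ v s.1 = s.2)) :
    C.filter (fun s => μ v s.1 = s.2) \ C.filter (fun s => μ u s.1 = s.2)
      = C.filter (fun s => μ u s.1 ≠ μ v s.1) := by
  classical
  ext s
  simp only [Finset.mem_sdiff, Finset.mem_filter, not_and]
  constructor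
  · rintro ⟨⟨h1, h2⟩, h3⟩
    exact ⟨h1, fun he => (h3 h1) (he.trans h2)⟩
  · rintro ⟨h1, h2⟩
    have hu2 : μ u s.1 ≠ s.2 := by
      intro hu
      have := hsub (Finset.mem_filter.2 ⟨h1, hu⟩)
      rw [Finset.mem_filter] at this
      exact h2 (hu.trans this.2.symm)
    exact ⟨⟨h1, bool_resolve h2 hu2⟩, fun _ hu => hu2 hu⟩

lemma chain_card_diff (hSc : ScHyp μ Sc) (u v : V) (r : Fin τ × Bool) :
    ((((chainF μ M hM r).filter (fun s => μ u s.1 = s.2)).card : ℤ)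
      - (((chainF μ M hM r).filter (fun s => μ v s.1 = s.2)).card : ℤ)).natAbs
    = ((chainF μ M hM r).filter (fun s => μ u s.1 ≠ μ v s.1)).card := by
  classical
  set C := chainF μ M hM r with hC
  have hcmp : C.filter (fun s => μ u s.1 = s.2) ⊆ C.filter (fun s => μ v s.1 = s.2)
      ∨ C.filter (fun s => μ v s.1 = s.2) ⊆ C.filter (fun s => μ u s.1 = s.2) := by
    by_contra hc
    push_neg at hc
    obtain ⟨a, ha, haB⟩ := Finset.not_subset.1 hc.1
    obtain ⟨b, hb, hbA⟩ := Finset.not_subset.1 hc.2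
    rw [Finset.mem_filter] at ha hb
    have hau : u ∈ smF μ a := mem_smF.2 ha.2
    have hbv : v ∈ smF μ b := mem_smF.2 hb.2
    rcases chain_comparable hSc ha.1 hb.1 with h | h
    · exact hbA (Finset.mem_filter.2 ⟨hb.1, mem_smF.1 (h hau)⟩)
    · exact haB (Finset.mem_filter.2 ⟨ha.1, mem_smF.1 (h hbv)⟩)
  rcases hcmp with h | h
  · rw [← sdiff_filter_eq h, Finset.card_sdiff_of_subset h]
    have := Finset.card_le_card h
    omega
  · have heq := sdiff_filter_eq h
    have hflip : C.filter (fun s => μ v s.1 ≠ μ u s.1)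
        = C.filter (fun s => μ u s.1 ≠ μ v s.1) := by
      apply Finset.filter_congr
      intro s _
      constructor
      · exact fun hh => Ne.symm hh
      · exact fun hh => Ne.symm hh
    rw [← hflip, ← heq, Finset.card_sdiff_of_subset h]
    have := Finset.card_le_card h
    omega

end Count

section Dir1

variable {V : Type*} [Fintype V] {τ : ℕ}
variable {μ : V → Fin τ → Bool} {Sc : SimpleGraph (Fin τ × Bool)} {M : Sc.Subgraph}

lemma hamming_card (u v : V) :
    hammingDist (μ u) (μ v) = (univ.filter (fun i => μ u i ≠ μ v i)).card := by
  rw [hammingDist]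

private lemma bool_flip {a b : Bool} (h : b ≠ a) : b = !a := by
  cases a <;> cases b <;> simp_all

lemma dir1 {G : SimpleGraph V} (hV : Nonempty V)
    (hiso : ∀ u v : V, G.dist u v = hammingDist (μ u) (μ v))
    (hsurj : ∀ (i : Fin τ) (b : Bool), ∃ v : V, μ v i = b)
    (hSc : ScHyp μ Sc) (hM : M.IsMatching) :
    ∃ g : V → Fin (τ - M.edgeSet.ncard) → ℤ,
      ∀ u v : V, G.dist u v = ∑ i, (g u i - g v i).natAbs := by
  classical
  have hVpos : 0 < Fintype.card V := Fintype.card_pos_iff.2 hV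
  set enc := Fintype.equivFin (Fin τ × Bool) with henc
  set roots : Finset (Fin τ × Bool) := univ.filter (fun s => s ∉ M.verts) with hroots
  set RF : Finset (Fin τ × Bool) :=
    roots.filter (fun r => enc r < enc (pairR μ M hM r)) with hRF
  set RF' : Finset (Fin τ × Bool) :=
    roots.filter (fun r => enc (pairR μ M hM r) < enc r) with hRF'
  have hroots_not_mem : ∀ r ∈ roots, r ∉ M.verts := by
    intro r hr; exact (Finset.mem_filter.1 hr).2
  have hpair_mem : ∀ r : Fin τ × Bool, pairR μ M hM r ∈ roots := by
    intro r
    exact Finset.mem_filter.2 ⟨mem_univ _, pairR_not_mem hSc r⟩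
  have henc_ne : ∀ r : Fin τ × Bool, enc (pairR μ M hM r) ≠ enc r := by
    intro r h
    exact pair_ne hSc hsurj r (enc.injective h)
  have hRF'eq : RF' = roots.filter (fun r => ¬ (enc r < enc (pairR μ M hM r))) := by
    apply Finset.filter_congr
    intro r _
    constructor
    · intro hq
      simp only [not_lt]
      exact hq.le
    · intro hnp
      simp only [not_lt] at hnp
      exact lt_of_le_of_ne hnp (henc_ne r)
  have hsplit : RF.card + RF'.card = roots.card := by
    rw [hRF'eq, hRF]
    exact Finset.card_filter_add_card_filter_not _
  have hbij : RF.card = RF'.card := by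
    apply Finset.card_bij (fun r _ => pairR μ M hM r)
    · intro r hr
      rw [hRF, Finset.mem_filter] at hr
      rw [hRF', Finset.mem_filter]
      refine ⟨hpair_mem r, ?_⟩
      rw [pair_pair hSc (hroots_not_mem r hr.1)]
      exact hr.2
    · intro a ha b hb h
      rw [hRF, Finset.mem_filter] at ha hb
      rw [← pair_pair (hM := hM) hSc (hroots_not_mem a ha.1), h,
        pair_pair hSc (hroots_not_mem b hb.1)]
    · intro r' hr'
      rw [hRF', Finset.mem_filter] at hr'
      refine ⟨pairR μ M hM r', ?_, pair_pair hSc (hroots_not_mem r' hr'.1)⟩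
      rw [hRF, Finset.mem_filter]
      refine ⟨hpair_mem r', ?_⟩
      rw [pair_pair hSc (hroots_not_mem r' hr'.1)]
      exact hr'.2
  have hvertscard : (univ.filter (fun s : Fin τ × Bool => s ∈ M.verts)).card
      = M.verts.ncard := by
    rw [Set.ncard_eq_toFinset_card']
    congr 1
    ext s
    simp [Set.mem_toFinset]
  have htotal : roots.card + M.verts.ncard = 2 * τ := by
    have h1 := Finset.card_filter_add_card_filter_not
      (s := (univ : Finset (Fin τ × Bool))) (p := fun s => s ∈ M.verts)
    have h2 : (univ : Finset (Fin τ × Bool)).card = 2 * τ := by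
      rw [Finset.card_univ, Fintype.card_prod, Fintype.card_fin, Fintype.card_bool]
      ring
    rw [hroots]
    omega
  have hMverts := matching_verts_ncard hM
  have hcardRF : RF.card = τ - M.edgeSet.ncard := by omega
  set e : Fin (τ - M.edgeSet.ncard) ≃ {x // x ∈ RF} :=
    (Fintype.equivFinOfCardEq (by rw [Fintype.card_coe]; exact hcardRF)).symm with he
  refine ⟨fun w k => (((chainF μ M hM (e k).1).filter (fun s => μ w s.1 = s.2)).card : ℤ),
    ?_⟩
  intro u v
  rw [hiso u v, hamming_card u v]
  have hstep1 : ∀ k, ((((chainF μ M hM (e k).1).filter (fun s => μ u s.1 = s.2)).card : ℤ)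
      - (((chainF μ M hM (e k).1).filter (fun s => μ v s.1 = s.2)).card : ℤ)).natAbs
      = ((chainF μ M hM (e k).1).filter (fun s => μ u s.1 ≠ μ v s.1)).card :=
    fun k => chain_card_diff hSc u v (e k).1
  rw [Finset.sum_congr rfl (fun k _ => hstep1 k)]
  have hstep2 : ∑ k, ((chainF μ M hM (e k).1).filter (fun s => μ u s.1 ≠ μ v s.1)).card
      = ∑ r ∈ RF, ((chainF μ M hM r).filter (fun s => μ u s.1 ≠ μ v s.1)).card := by
    rw [← Finset.sum_coe_sort RF
      (fun r => ((chainF μ M hM r).filter (fun s => μ u s.1 ≠ μ v s.1)).card)]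
    exact Equiv.sum_comp e
      (fun x : {x // x ∈ RF} => ((chainF μ M hM x.1).filter (fun s => μ u s.1 ≠ μ v s.1)).card)
  rw [hstep2]
  have hdisj : ∀ r ∈ RF, ∀ r' ∈ RF, r ≠ r' →
      Disjoint ((chainF μ M hM r).filter (fun s => μ u s.1 ≠ μ v s.1))
        ((chainF μ M hM r').filter (fun s => μ u s.1 ≠ μ v s.1)) := by
    intro r hr r' hr' hne
    rw [Finset.disjoint_left]
    intro s hs hs'
    rw [Finset.mem_filter] at hs hs'
    apply hne
    rw [← root_of_chain hSc hsurj hVpos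
        (hroots_not_mem r (Finset.filter_subset _ _ hr)) hs.1,
      ← root_of_chain hSc hsurj hVpos
        (hroots_not_mem r' (Finset.filter_subset _ _ hr')) hs'.1]
  rw [← Finset.card_biUnion hdisj]
  refine (Finset.card_bij (fun (x : Fin τ × Bool) _ => x.1) ?_ ?_ ?_).symm
  · intro x hx
    rw [Finset.mem_biUnion] at hx
    obtain ⟨r, _, hx⟩ := hx
    rw [Finset.mem_filter] at hx
    exact Finset.mem_filter.2 ⟨mem_univ _, hx.2⟩
  · intro a ha b hb hab
    by_contra hne
    have hb2 : b = scmp a := by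
      have h2 : b.2 ≠ a.2 := by
        intro h
        exact hne (Prod.ext hab.symm h).symm
      rw [scmp, hab]
      exact Prod.ext rfl (bool_flip h2)
    rw [Finset.mem_biUnion] at ha hb
    obtain ⟨r, hrRF, ha⟩ := ha
    obtain ⟨r', hr'RF, hb⟩ := hb
    rw [Finset.mem_filter] at ha hb
    have hrroots := Finset.filter_subset _ _ hrRF
    have hr'roots := Finset.filter_subset _ _ hr'RF
    have hscmp : scmp a ∈ chainF μ M hM (pairR μ M hM r) :=
      scmp_mem_chain hSc hsurj hVpos (hroots_not_mem r hrroots) ha.1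
    have hb1' : scmp a ∈ chainF μ M hM r' := by rw [← hb2]; exact hb.1
    have e1 := root_of_chain hSc hsurj hVpos (hroots_not_mem r' hr'roots) hb1'
    have e2 := root_of_chain hSc hsurj hVpos (pairR_not_mem hSc r) hscmp
    have h3 : r' = pairR μ M hM r := e1.symm.trans e2
    subst h3
    rw [hRF, Finset.mem_filter] at hrRF hr'RF
    have hc1 := hrRF.2
    have hc2 := hr'RF.2
    rw [pair_pair hSc (hroots_not_mem r hrroots)] at hc2
    exact lt_asymm hc1 hc2
  · intro i hi
    rw [Finset.mem_filter] at hi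
    set s0 : Fin τ × Bool := (i, false) with hs0
    set r0 := rootOf μ M hM s0 with hr0
    have hr0nm : r0 ∉ M.verts := root_not_mem hSc hsurj s0
    have hr0roots : r0 ∈ roots := Finset.mem_filter.2 ⟨mem_univ _, hr0nm⟩
    have hs0chain : s0 ∈ chainF μ M hM r0 := mem_chain_root hSc s0
    by_cases hlt : enc r0 < enc (pairR μ M hM r0)
    · refine ⟨s0, ?_, rfl⟩
      rw [Finset.mem_biUnion]
      exact ⟨r0, Finset.mem_filter.2 ⟨hr0roots, hlt⟩,
        Finset.mem_filter.2 ⟨hs0chain, hi.2⟩⟩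
    · have hlt2 : enc (pairR μ M hM r0) < enc r0 :=
        lt_of_le_of_ne (not_lt.1 hlt) (henc_ne r0)
      refine ⟨scmp s0, ?_, rfl⟩
      rw [Finset.mem_biUnion]
      refine ⟨pairR μ M hM r0, ?_, ?_⟩
      · refine Finset.mem_filter.2 ⟨hpair_mem r0, ?_⟩
        rw [pair_pair hSc hr0nm]
        exact hlt2
      · refine Finset.mem_filter.2
          ⟨scmp_mem_chain hSc hsurj hVpos hr0nm hs0chain, hi.2⟩

end Dir1

section Dir2A

private lemma bool_iff_not {a c b : Bool} (h : a ≠ c) : (a = b) ↔ ¬ (c = b) := by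
  cases a <;> cases c <;> cases b <;> simp_all

private lemma bool_not_eq {a : Bool} : ((!a) = a) → False := by cases a <;> simp

variable {V : Type*} [Fintype V] {τ : ℕ}
variable {μ : V → Fin τ → Bool} {G : SimpleGraph V}

lemma exists_cross_edge (hconn : G.Connected)
    (hiso : ∀ u v : V, G.dist u v = hammingDist (μ u) (μ v))
    (hsurj : ∀ (i : Fin τ) (b : Bool), ∃ v : V, μ v i = b) (i : Fin τ) :
    ∃ u v : V, G.Adj u v ∧ μ u i ≠ μ v i ∧ ∀ k, k ≠ i → μ u k = μ v k := by
  classical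
  obtain ⟨a, ha⟩ := hsurj i false
  obtain ⟨b, hb⟩ := hsurj i true
  have hab : μ a i ≠ μ b i := by rw [ha, hb]; simp
  obtain ⟨w⟩ := hconn.preconnected a b
  have key : ∀ (x y : V) (p : G.Walk x y), μ x i ≠ μ y i →
      ∃ u v : V, G.Adj u v ∧ μ u i ≠ μ v i := by
    intro x y p
    induction p with
    | nil => intro h; exact absurd rfl h
    | @cons x' c y' h p ih =>
      intro hne
      by_cases hxc : μ x' i = μ c i
      · obtain ⟨u, v, h1, h2⟩ := ih (fun hcy => hne (hxc.trans hcy))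
        exact ⟨u, v, h1, h2⟩
      · exact ⟨x', c, h, hxc⟩
  obtain ⟨u, v, hadj, hne⟩ := key a b w hab
  refine ⟨u, v, hadj, hne, ?_⟩
  have h1 : hammingDist (μ u) (μ v) = 1 := by
    rw [← hiso]
    exact SimpleGraph.dist_eq_one_iff_adj.2 hadj
  rw [hamming_card] at h1
  intro k hk
  by_contra hc
  have hsub : ({i, k} : Finset (Fin τ)) ⊆ univ.filter (fun m => μ u m ≠ μ v m) := by
    intro m hm
    rcases Finset.mem_insert.1 hm with rfl | hm
    · exact Finset.mem_filter.2 ⟨mem_univ _, hne⟩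
    · rw [Finset.mem_singleton] at hm
      subst hm
      exact Finset.mem_filter.2 ⟨mem_univ _, hc⟩
  have := Finset.card_le_card hsub
  rw [h1, Finset.card_pair (fun h => hk h.symm)] at this
  omega

lemma hamm_split {x y w : V} {i : Fin τ} (hxy : μ x i ≠ μ y i)
    (hoth : ∀ k, k ≠ i → μ x k = μ y k) (hw : μ w i = μ y i) :
    hammingDist (μ w) (μ x) = hammingDist (μ w) (μ y) + 1 := by
  classical
  rw [hamming_card, hamming_card]
  have heq : univ.filter (fun k => μ w k ≠ μ x k)
      = insert i (univ.filter (fun k => μ w k ≠ μ y k)) := by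
    ext k
    rw [Finset.mem_filter, Finset.mem_insert, Finset.mem_filter]
    by_cases hk : k = i
    · subst hk
      constructor
      · intro _; exact Or.inl rfl
      · intro _
        refine ⟨mem_univ _, ?_⟩
        rw [hw]
        exact fun h => hxy h.symm
    · rw [hoth k hk]
      constructor
      · intro h; exact Or.inr h
      · rintro (h | h)
        · exact absurd h hk
        · exact h
  rw [heq, Finset.card_insert_of_notMem (by
    rw [Finset.mem_filter]
    push_neg
    intro _
    exact hw)]

variable {d : ℕ} {g : V → Fin d → ℤ}

lemma L1_split_ge {x y w : V} {j : Fin d} {t : ℤ}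
    (hoth : ∀ k, k ≠ j → g x k = g y k) (hx : g x j = t - 1) (hy : g y j = t)
    (hw : t ≤ g w j) :
    ∑ k, (g w k - g x k).natAbs = (∑ k, (g w k - g y k).natAbs) + 1 := by
  classical
  rw [← Finset.sum_erase_add _ _ (mem_univ j), ← Finset.sum_erase_add _ _ (mem_univ j)]
  have h1 : ∑ k ∈ univ.erase j, (g w k - g x k).natAbs
      = ∑ k ∈ univ.erase j, (g w k - g y k).natAbs := by
    apply Finset.sum_congr rfl
    intro k hk
    rw [hoth k (Finset.ne_of_mem_erase hk)]
  rw [h1, hx, hy]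
  omega

lemma L1_split_lt {x y w : V} {j : Fin d} {t : ℤ}
    (hoth : ∀ k, k ≠ j → g x k = g y k) (hx : g x j = t - 1) (hy : g y j = t)
    (hw : g w j ≤ t - 1) :
    ∑ k, (g w k - g y k).natAbs = (∑ k, (g w k - g x k).natAbs) + 1 := by
  classical
  rw [← Finset.sum_erase_add _ _ (mem_univ j), ← Finset.sum_erase_add _ _ (mem_univ j)]
  have h1 : ∑ k ∈ univ.erase j, (g w k - g x k).natAbs
      = ∑ k ∈ univ.erase j, (g w k - g y k).natAbs := by
    apply Finset.sum_congr rfl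
    intro k hk
    rw [hoth k (Finset.ne_of_mem_erase hk)]
  rw [h1, hx, hy]
  omega

lemma cut_core (hiso : ∀ u v : V, G.dist u v = hammingDist (μ u) (μ v))
    (hg : ∀ u v : V, G.dist u v = ∑ k, (g u k - g v k).natAbs)
    {x y : V} {i : Fin τ} {j : Fin d} {t : ℤ} (hne : μ x i ≠ μ y i)
    (hoth : ∀ k, k ≠ i → μ x k = μ y k) (hothg : ∀ k, k ≠ j → g x k = g y k)
    (hx : g x j = t - 1) (hy : g y j = t) :
    ∀ w, μ w i = μ y i ↔ t ≤ g w j := by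
  intro w
  have hdx : hammingDist (μ w) (μ x) = ∑ k, (g w k - g x k).natAbs := by
    rw [← hiso, hg]
  have hdy : hammingDist (μ w) (μ y) = ∑ k, (g w k - g y k).natAbs := by
    rw [← hiso, hg]
  constructor
  · intro hwb
    by_contra hnot
    have hwlt : g w j ≤ t - 1 := by omega
    have e1 := hamm_split hne hoth hwb
    have e2 := L1_split_lt hothg hx hy hwlt
    rw [hdx, hdy] at e1
    omega
  · intro hge
    by_contra hnb
    have hwu : μ w i = μ x i := by
      cases h1 : μ x i <;> cases h2 : μ y i <;> cases h3 : μ w i <;> simp_all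
    have e1 := hamm_split (fun h => hne h.symm) (fun k hk => (hoth k hk).symm) hwu
    have e2 := L1_split_ge hothg hx hy hge
    rw [hdx, hdy] at e1
    omega

lemma exists_cut (hconn : G.Connected)
    (hiso : ∀ u v : V, G.dist u v = hammingDist (μ u) (μ v))
    (hsurj : ∀ (i : Fin τ) (b : Bool), ∃ v : V, μ v i = b)
    (hg : ∀ u v : V, G.dist u v = ∑ k, (g u k - g v k).natAbs) (i : Fin τ) :
    ∃ (p : Fin d × ℤ) (b : Bool), ∀ w, μ w i = b ↔ p.2 ≤ g w p.1 := by
  classical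
  obtain ⟨u, v, hadj, hne, hoth⟩ := exists_cross_edge hconn hiso hsurj i
  have hsum : ∑ k, (g u k - g v k).natAbs = 1 := by
    rw [← hg]
    exact SimpleGraph.dist_eq_one_iff_adj.2 hadj
  obtain ⟨j, hj1, hj0⟩ := sum_nat_eq_one hsum
  have hj1' : (g u j - g v j).natAbs = 1 := hj1
  have hothg : ∀ k, k ≠ j → g u k = g v k := by
    intro k hk
    have h0 : (g u k - g v k).natAbs = 0 := hj0 k hk
    omega
  by_cases hlt : g u j < g v j
  · refine ⟨(j, g v j), μ v i, ?_⟩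
    exact cut_core hiso hg hne hoth hothg (show g u j = g v j - 1 by omega) rfl
  · refine ⟨(j, g u j), μ u i, ?_⟩
    exact cut_core hiso hg (fun h => hne h.symm) (fun k hk => (hoth k hk).symm)
      (fun k hk => (hothg k hk).symm) (show g v j = g u j - 1 by omega) rfl

lemma walk_ivt {G : SimpleGraph V} (f : V → ℤ)
    (hstep : ∀ a b : V, G.Adj a b → (f a - f b).natAbs ≤ 1) {a b : V}
    (w : G.Walk a b) {t : ℤ} (ha : f a < t) (hb : t ≤ f b) : ∃ x, f x = t := by
  induction w with
  | nil => exact absurd hb (by omega)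
  | @cons x c y h p ih =>
    by_cases hc : t ≤ f c
    · have := hstep _ _ h
      exact ⟨c, by omega⟩
    · exact ih (by omega) hb

end Dir2A

section Dir2

variable {V : Type*} [Fintype V] {τ : ℕ}
variable {μ : V → Fin τ → Bool} {G : SimpleGraph V}
variable {Sc : SimpleGraph (Fin τ × Bool)} {M : Sc.Subgraph}

lemma dir2 (hconn : G.Connected)
    (hiso : ∀ u v : V, G.dist u v = hammingDist (μ u) (μ v))
    (hsurj : ∀ (i : Fin τ) (b : Bool), ∃ v : V, μ v i = b)
    (hSc : ScHyp μ Sc)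
    (hmax : ∀ M' : Sc.Subgraph, M'.IsMatching → M'.edgeSet.ncard ≤ M.edgeSet.ncard)
    {d : ℕ} (g : V → Fin d → ℤ)
    (hg : ∀ u v : V, G.dist u v = ∑ k, (g u k - g v k).natAbs) :
    τ - M.edgeSet.ncard ≤ d := by
  classical
  choose P b hPb using (fun i => exists_cut hconn hiso hsurj hg i)
  have hPinj : Function.Injective P := by
    intro i i' hP
    by_contra hne
    obtain ⟨u, v, hadj, hne2, hoth⟩ := exists_cross_edge hconn hiso hsurj i
    have h1 := hPb i u
    have h2 := hPb i v
    have h3 := hPb i' u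
    have h4 := hPb i' v
    rw [← hP] at h3 h4
    have heqi' : μ u i' = μ v i' := hoth i' (fun h => hne h.symm)
    have hbfact : (μ u i = b i) ↔ ¬(μ v i = b i) := bool_iff_not hne2
    have hQuv : ((P i).2 ≤ g u (P i).1) ↔ ¬((P i).2 ≤ g v (P i).1) := by
      rw [← h1, ← h2]; exact hbfact
    have hQuv2 : ((P i).2 ≤ g u (P i).1) ↔ ((P i).2 ≤ g v (P i).1) := by
      rw [← h3, ← h4, heqi']
    tauto
  have hexact : ∀ i, ∃ w, g w (P i).1 = (P i).2 := by
    intro i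
    obtain ⟨y, hy⟩ := hsurj i (b i)
    obtain ⟨x, hx⟩ := hsurj i (!(b i))
    have hyge : (P i).2 ≤ g y (P i).1 := (hPb i y).1 hy
    have hxlt : ¬ (P i).2 ≤ g x (P i).1 := by
      intro hc
      have h5 := (hPb i x).2 hc
      rw [hx] at h5
      exact bool_not_eq h5
    obtain ⟨w⟩ := hconn.preconnected x y
    have hstep : ∀ a c : V, G.Adj a c →
        ((fun z => g z (P i).1) a - (fun z => g z (P i).1) c).natAbs ≤ 1 := by
      intro a c hac
      have hd : ∑ k, (g a k - g c k).natAbs = 1 := by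
        rw [← hg]
        exact SimpleGraph.dist_eq_one_iff_adj.2 hac
      calc ((fun z => g z (P i).1) a - (fun z => g z (P i).1) c).natAbs
          ≤ ∑ k, (g a k - g c k).natAbs :=
            Finset.single_le_sum (f := fun k => (g a k - g c k).natAbs)
              (fun k _ => Nat.zero_le _) (mem_univ _)
        _ = 1 := hd
    exact walk_ivt (fun z => g z (P i).1) hstep w (by omega)
      (by exact hyge)
  set wS : Finset (Fin τ) :=
    univ.filter (fun i => ∃ i', (P i').1 = (P i).1 ∧ (P i).2 < (P i').2) with hwS
  have hnxt0 : ∀ i : Fin τ, ∃ m : Fin τ, i ∈ wS →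
      ((P m).1 = (P i).1 ∧ (P i).2 < (P m).2) ∧
      ∀ i'' : Fin τ, (P i'').1 = (P i).1 ∧ (P i).2 < (P i'').2 → (P m).2 ≤ (P i'').2 := by
    intro i
    by_cases hi : i ∈ wS
    · have hne : (univ.filter
          (fun i'' => (P i'').1 = (P i).1 ∧ (P i).2 < (P i'').2)).Nonempty := by
        rw [hwS, Finset.mem_filter] at hi
        obtain ⟨i', h'⟩ := hi.2
        exact ⟨i', Finset.mem_filter.2 ⟨mem_univ _, h'⟩⟩
      obtain ⟨m, hm, hmin⟩ := Finset.exists_min_image _ (fun i'' => (P i'').2) hne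
      rw [Finset.mem_filter] at hm
      exact ⟨m, fun _ => ⟨hm.2,
        fun i'' h'' => hmin i'' (Finset.mem_filter.2 ⟨mem_univ _, h''⟩)⟩⟩
    · exact ⟨i, fun h => absurd h hi⟩
  choose nxt hnxt using hnxt0
  have hnxt1 : ∀ i ∈ wS, (P (nxt i)).1 = (P i).1 ∧ (P i).2 < (P (nxt i)).2 :=
    fun i hi => (hnxt i hi).1
  have hnxtmin : ∀ i ∈ wS, ∀ i'', (P i'').1 = (P i).1 ∧ (P i).2 < (P i'').2 →
      (P (nxt i)).2 ≤ (P i'').2 := fun i hi => (hnxt i hi).2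
  have hnxt_inj : ∀ i ∈ wS, ∀ i' ∈ wS, nxt i = nxt i' → i = i' := by
    intro i hi i' hi' he
    have h1 := hnxt1 i hi
    have h2 := hnxt1 i' hi'
    have hj : (P i).1 = (P i').1 := by rw [← h1.1, he, h2.1]
    have ht : (P i).2 = (P i').2 := by
      by_contra hc
      rcases lt_or_gt_of_ne hc with hlt | hlt
      · have h5 := hnxtmin i hi i' ⟨hj.symm, hlt⟩
        rw [he] at h5
        have := h2.2
        omega
      · have h5 := hnxtmin i' hi' i ⟨hj, hlt⟩
        rw [← he] at h5
        have := h1.2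
        omega
    exact hPinj (Prod.ext hj ht)
  have hcompl : (univ.filter (fun i => i ∉ wS)).card ≤ d := by
    have hmaps : ∀ i ∈ univ.filter (fun i => i ∉ wS),
        (P i).1 ∈ (univ : Finset (Fin d)) := fun _ _ => mem_univ _
    refine le_trans (Finset.card_le_card_of_injOn (fun i => (P i).1) hmaps ?_)
      (by simp)
    intro i hi i' hi' hj
    rw [Finset.mem_coe, Finset.mem_filter] at hi hi'
    dsimp only at hj
    by_contra hne
    rcases lt_trichotomy (P i).2 (P i').2 with h | h | h
    · exact hi.2 (Finset.mem_filter.2 ⟨mem_univ _, ⟨i', hj.symm, h⟩⟩)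
    · exact hne (hPinj (Prod.ext hj h))
    · exact hi'.2 (Finset.mem_filter.2 ⟨mem_univ _, ⟨i, hj, h⟩⟩)
  have hsplitτ : wS.card + (univ.filter (fun i => i ∉ wS)).card = τ := by
    have h1 := Finset.card_filter_add_card_filter_not
      (s := (univ : Finset (Fin τ))) (p := fun i => i ∈ wS)
    have h2 : univ.filter (fun i => i ∈ wS) = wS := by
      ext i
      simp only [Finset.mem_filter, mem_univ, true_and]
    rw [h2, Finset.card_univ, Fintype.card_fin] at h1
    exact h1
  set L : Fin τ → Fin τ × Bool := fun i => (i, b i) with hL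
  set R : Fin τ → Fin τ × Bool := fun i => (nxt i, !(b (nxt i))) with hR
  have hLR_ne : ∀ i i', L i ≠ R i' := by
    intro i i' he
    have h1 : i = nxt i' := congrArg Prod.fst he
    have h2 : b i = !(b (nxt i')) := congrArg Prod.snd he
    rw [← h1] at h2
    exact bool_not_eq h2.symm
  have hScAdj : ∀ i ∈ wS, Sc.Adj (L i) (R i) := by
    intro i hi
    obtain ⟨hj1, hlt1⟩ := hnxt1 i hi
    rw [hSc]
    refine ⟨hLR_ne i i, ?_, ?_⟩
    · rw [Set.eq_univ_iff_forall]
      intro w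
      simp only [Set.mem_union, Set.mem_setOf_eq, hL, hR]
      by_cases hb1 : μ w i = b i
      · exact Or.inl hb1
      · have hc1 : ¬ (P i).2 ≤ g w (P i).1 := fun hc => hb1 ((hPb i w).2 hc)
        have hc2 : ¬ (P (nxt i)).2 ≤ g w (P (nxt i)).1 := by
          rw [hj1]
          omega
        have hc3 : μ w (nxt i) ≠ b (nxt i) := fun hc => hc2 ((hPb (nxt i) w).1 hc)
        exact Or.inr (bool_flip hc3)
    · obtain ⟨w, hw⟩ := hexact i
      refine ⟨w, ?_, ?_⟩
      · show μ w (L i).1 = (L i).2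
        rw [hL]
        exact (hPb i w).2 (le_of_eq hw.symm)
      · show μ w (R i).1 = (R i).2
        rw [hR]
        have hc2 : ¬ (P (nxt i)).2 ≤ g w (P (nxt i)).1 := by
          rw [hj1, hw]
          omega
        exact bool_flip (fun hc => hc2 ((hPb (nxt i) w).1 hc))
  set M' : Sc.Subgraph := {
    verts := {s | ∃ i ∈ wS, s = L i ∨ s = R i}
    Adj := fun s t' => ∃ i ∈ wS, (s = L i ∧ t' = R i) ∨ (s = R i ∧ t' = L i)
    adj_sub := by
      rintro s t' ⟨i, hi, ⟨rfl, rfl⟩ | ⟨rfl, rfl⟩⟩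
      · exact hScAdj i hi
      · exact (hScAdj i hi).symm
    edge_vert := by
      rintro s t' ⟨i, hi, ⟨rfl, rfl⟩ | ⟨rfl, rfl⟩⟩
      · exact ⟨i, hi, Or.inl rfl⟩
      · exact ⟨i, hi, Or.inr rfl⟩
    symm := ⟨by
      rintro s t' ⟨i, hi, ⟨rfl, rfl⟩ | ⟨rfl, rfl⟩⟩
      · exact ⟨i, hi, Or.inr ⟨rfl, rfl⟩⟩
      · exact ⟨i, hi, Or.inl ⟨rfl, rfl⟩⟩⟩ } with hM'def
  have hLinj : ∀ i i', L i = L i' → i = i' := fun i i' h => congrArg Prod.fst h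
  have hM'm : M'.IsMatching := by
    rintro s ⟨i, hi, hs | hs⟩
    · subst hs
      refine ⟨R i, ⟨i, hi, Or.inl ⟨rfl, rfl⟩⟩, ?_⟩
      rintro t' ⟨i', hi', ⟨hs', rfl⟩ | ⟨hs', rfl⟩⟩
      · rw [← hLinj i i' hs']
      · exact absurd hs' (hLR_ne i i')
    · subst hs
      refine ⟨L i, ⟨i, hi, Or.inr ⟨rfl, rfl⟩⟩, ?_⟩
      rintro t' ⟨i', hi', ⟨hs', rfl⟩ | ⟨hs', rfl⟩⟩
      · exact absurd hs'.symm (hLR_ne i' i)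
      · rw [← hnxt_inj i hi i' hi' (congrArg Prod.fst hs')]
  have hedges : wS.card ≤ M'.edgeSet.ncard := by
    have hsub : ↑(wS.image (fun i => (s(L i, R i) : Sym2 (Fin τ × Bool))))
        ⊆ M'.edgeSet := by
      intro e he
      rw [Finset.mem_coe, Finset.mem_image] at he
      obtain ⟨i, hi, rfl⟩ := he
      exact SimpleGraph.Subgraph.mem_edgeSet.2 ⟨i, hi, Or.inl ⟨rfl, rfl⟩⟩
    have hcard : (wS.image (fun i => (s(L i, R i) : Sym2 _))).card = wS.card := by
      apply Finset.card_image_of_injOn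
      intro i hi i' hi' he
      dsimp only at he
      rcases Sym2.eq_iff.1 he with ⟨h1, h2⟩ | ⟨h1, h2⟩
      · exact hLinj i i' h1
      · exact absurd h1 (hLR_ne i i')
    rw [← hcard, ← Set.ncard_coe_finset]
    exact Set.ncard_le_ncard hsub (Set.toFinite _)
  have hfinal := hmax M' hM'm
  omega

end Dir2

/-- Eppstein's lattice dimension theorem: if `G` is a partial cube with isometric
dimension `τ` (witnessed by an isometric embedding `μ` into `{0,1}^τ` all of whose
coordinates are surjective), and `M` is a maximum matching in the semicube graph
`Sc(G)` (whose vertices are the `2τ` semicubes, two semicubes being adjacent when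
they cover all vertices non-disjointly), then the lattice dimension of `G` — the least
`d` such that `G` embeds isometrically into `ℤ^d` with L1 distance — is `τ - |M|`. -/
theorem stmt_5 {V : Type*} [Fintype V] (G : SimpleGraph V) (hconn : G.Connected)
    (τ : ℕ) (μ : V → Fin τ → Bool)
    (hiso : ∀ u v : V, G.dist u v = hammingDist (μ u) (μ v))
    (hsurj : ∀ (i : Fin τ) (b : Bool), ∃ v : V, μ v i = b)
    (hmin : IsLeast {t : ℕ | ∃ μ' : V → Fin t → Bool,
        ∀ u v : V, G.dist u v = hammingDist (μ' u) (μ' v)} τ)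
    (Sc : SimpleGraph (Fin τ × Bool))
    (hSc : ∀ s t : Fin τ × Bool, Sc.Adj s t ↔ s ≠ t ∧
        {v : V | μ v s.1 = s.2} ∪ {v : V | μ v t.1 = t.2} = Set.univ ∧
        ({v : V | μ v s.1 = s.2} ∩ {v : V | μ v t.1 = t.2}).Nonempty)
    (M : Sc.Subgraph) (hM : M.IsMatching)
    (hmax : ∀ M' : Sc.Subgraph, M'.IsMatching → M'.edgeSet.ncard ≤ M.edgeSet.ncard) :
    IsLeast {d : ℕ | ∃ g : V → Fin d → ℤ,
        ∀ u v : V, G.dist u v = ∑ i, (g u i - g v i).natAbs}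
      (τ - M.edgeSet.ncard) := by
  constructor
  · obtain ⟨g, hgg⟩ := dir1 hconn.nonempty hiso hsurj hSc hM
    exact ⟨g, hgg⟩
  · intro dd hd
    obtain ⟨g, hgg⟩ := hd
    exact dir2 hconn hiso hsurj hSc hmax g hgg
end

section
/- When the projection construction is applied to a box L = [a_0,b_0] × ... × [a_{d−1},b_{d−1}] ∩ Z^d, the images occupy a contiguous range of integer x-coordinates and a contiguous range of integer y-coordinates, so the drawing fits in a bounding box of area at most n^2 where n = |L|. -/
noncomputable section

/-- The partial x-sum `Σ_{k<i} X_k p_k`. -/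
def xpart {d : ℕ} (X : Fin d → ℤ) (i : Fin d) (p : Fin d → ℤ) : ℤ :=
  ∑ k ∈ Finset.univ.filter (fun k : Fin d => k < i), X k * p k

/-- The partial y-sum `Σ_{k>i} Y_k p_k`. -/
def ypart {d : ℕ} (Y : Fin d → ℤ) (i : Fin d) (p : Fin d → ℤ) : ℤ :=
  ∑ k ∈ Finset.univ.filter (fun k : Fin d => i < k), Y k * p k

/-- The lslice `L_{i,j}`: points of `L` whose `i`-th coordinate equals `j`. -/
def lslice {d : ℕ} (L : Set (Fin d → ℤ)) (i : Fin d) (j : ℤ) : Set (Fin d → ℤ) :=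
  {p ∈ L | p i = j}

/-- The recursive choice of the x-multipliers: `X_0 = 0` and, for `i > 0`, `X_i` is the
maximum over `j` (with both slices nonempty) of one plus the gap between the largest
partial x-sum over `L_{i,j-1}` and the smallest partial x-sum over `L_{i,j}`, so that
`X_i` exceeds the total x-extent of any lslice with smaller-index coordinates. -/
def XSpec {d : ℕ} (L : Set (Fin d → ℤ)) (X : Fin d → ℤ) : Prop :=
  (∀ i : Fin d, i.val = 0 → X i = 0) ∧
  ∀ i : Fin d, i.val ≠ 0 →
    X i = sSup {z : ℤ | ∃ j : ℤ, (lslice L i j).Nonempty ∧ (lslice L i (j - 1)).Nonempty ∧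
      z = 1 + sSup (xpart X i '' lslice L i (j - 1)) - sInf (xpart X i '' lslice L i j)}

/-- The symmetric choice of the y-multipliers, from larger index to smaller:
`Y_{d-1} = 0` and, for `i < d-1`, `Y_i` is defined from the partial y-sums. -/
def YSpec {d : ℕ} (L : Set (Fin d → ℤ)) (Y : Fin d → ℤ) : Prop :=
  (∀ i : Fin d, i.val = d - 1 → Y i = 0) ∧
  ∀ i : Fin d, i.val ≠ d - 1 →
    Y i = sSup {z : ℤ | ∃ j : ℤ, (lslice L i j).Nonempty ∧ (lslice L i (j - 1)).Nonempty ∧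
      z = 1 + sSup (ypart Y i '' lslice L i (j - 1)) - sInf (ypart Y i '' lslice L i j)}

open Finset

/-- Arithmetic filling lemma for one radix step. -/
lemma fill15 (c A B lo hi x : ℤ) (hc : 0 ≤ c) (hAB : A ≤ B) (hlohi : lo ≤ hi)
    (hrad : c ≤ 1 + B - A) (hx1 : c * lo + A ≤ x) (hx2 : x ≤ c * hi + B) :
    ∃ j y, lo ≤ j ∧ j ≤ hi ∧ A ≤ y ∧ y ≤ B ∧ x = c * j + y := by
  rcases hc.lt_or_eq with hc' | hc'
  · set u := x - (c * lo + A) with hu_def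
    have hu0 : 0 ≤ u := by omega
    have hur : u = c * (u / c) + u % c := (Int.mul_ediv_add_emod u c).symm
    have hr0 : 0 ≤ u % c := Int.emod_nonneg u (by omega)
    have hrc : u % c < c := Int.emod_lt_of_pos u hc'
    by_cases hq : u / c ≤ hi - lo
    · have hq0 : 0 ≤ u / c := Int.ediv_nonneg hu0 hc'.le
      refine ⟨lo + u / c, A + u % c, by omega, by omega, by omega, by omega, ?_⟩
      have h1 : c * (lo + u / c) = c * lo + c * (u / c) := by ring
      linarith [hur]
    · refine ⟨hi, x - c * hi, hlohi, le_refl _, ?_, by linarith, by ring⟩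
      have key : c * (hi - lo + 1) ≤ c * (u / c) :=
        mul_le_mul_of_nonneg_left (by omega) hc
      have e1 : c * (hi - lo + 1) = c * hi - c * lo + c := by ring
      linarith [hur]
  · refine ⟨lo, x, le_refl _, hlohi, ?_, ?_, by rw [← hc']; ring⟩
    · rw [← hc'] at hx1; linarith
    · rw [← hc'] at hx2; linarith

/-- Image of a partial weighted sum over a box is an interval. -/
lemma keyX15 {d : ℕ} (a b : Fin d → ℤ) (hab : ∀ i, a i ≤ b i) (X : Fin d → ℤ) (t : ℕ) (ht : t ≤ d)
    (h0 : ∀ k : Fin d, k.val < t → 0 ≤ X k)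
    (hr : ∀ k : Fin d, k.val < t →
      X k ≤ 1 + ∑ j ∈ univ.filter (fun j => j < k), X j * (b j - a j)) :
    (fun p : Fin d → ℤ => ∑ k ∈ univ.filter (fun k : Fin d => k.val < t), X k * p k) ''
        {p | ∀ i, a i ≤ p i ∧ p i ≤ b i}
      = Set.Icc (∑ k ∈ univ.filter (fun k : Fin d => k.val < t), X k * a k)
                (∑ k ∈ univ.filter (fun k : Fin d => k.val < t), X k * b k) := by
  induction t with
  | zero =>
    have hfil : univ.filter (fun k : Fin d => k.val < 0) = ∅ := by
      ext k; simp
    rw [hfil]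
    simp only [Finset.sum_empty]
    have hne : ({p | ∀ i, a i ≤ p i ∧ p i ≤ b i} : Set (Fin d → ℤ)).Nonempty :=
      ⟨a, fun i => ⟨le_refl _, hab i⟩⟩
    rw [Set.Icc_self]
    exact Set.Nonempty.image_const hne 0
  | succ t ih =>
    have ht' : t < d := ht
    set i : Fin d := ⟨t, ht'⟩ with hi_def
    have hfil : univ.filter (fun k : Fin d => k.val < t + 1)
        = insert i (univ.filter (fun k : Fin d => k.val < t)) := by
      ext k; simp [Fin.ext_iff, hi_def]; omega
    have hnot : i ∉ univ.filter (fun k : Fin d => k.val < t) := by simp [hi_def]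
    have himg := ih (le_of_lt ht') (fun k hk => h0 k (by omega)) (fun k hk => hr k (by omega))
    set A := ∑ k ∈ univ.filter (fun k : Fin d => k.val < t), X k * a k with hA
    set B := ∑ k ∈ univ.filter (fun k : Fin d => k.val < t), X k * b k with hB
    have hAB : A ≤ B := by
      apply Finset.sum_le_sum
      intro k hk
      exact mul_le_mul_of_nonneg_left (hab k) (h0 k (by simp only [Finset.mem_filter] at hk; omega))
    have hXi0 : 0 ≤ X i := h0 i (by simp [hi_def])
    have hradi : X i ≤ 1 + B - A := by
      have h1 := hr i (by simp [hi_def])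
      have h2 : univ.filter (fun j : Fin d => j < i) = univ.filter (fun k : Fin d => k.val < t) := by
        ext k; simp [Fin.lt_def, hi_def]
      have h3 : ∑ j ∈ univ.filter (fun k : Fin d => k.val < t), X j * (b j - a j) = B - A := by
        rw [hA, hB, ← Finset.sum_sub_distrib]
        apply Finset.sum_congr rfl; intro k _; ring
      rw [h2, h3] at h1
      omega
    rw [hfil, Finset.sum_insert hnot, Finset.sum_insert hnot]
    ext x
    simp only [Set.mem_image, Set.mem_setOf_eq, Set.mem_Icc]
    constructor
    · rintro ⟨p, hp, rfl⟩
      rw [Finset.sum_insert hnot]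
      have hmem : ∑ k ∈ univ.filter (fun k : Fin d => k.val < t), X k * p k ∈ Set.Icc A B := by
        rw [← himg]; exact ⟨p, hp, rfl⟩
      rw [Set.mem_Icc] at hmem
      constructor
      · exact add_le_add (mul_le_mul_of_nonneg_left (hp i).1 hXi0) hmem.1
      · exact add_le_add (mul_le_mul_of_nonneg_left (hp i).2 hXi0) hmem.2
    · rintro ⟨hx1, hx2⟩
      obtain ⟨j, y, hj1, hj2, hy1, hy2, hxy⟩ :=
        fill15 (X i) A B (a i) (b i) x hXi0 hAB (hab i) hradi hx1 hx2
      have hy : y ∈ Set.Icc A B := ⟨hy1, hy2⟩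
      rw [← himg] at hy
      obtain ⟨p0, hp0, hp0y⟩ := hy
      refine ⟨Function.update p0 i j, ?_, ?_⟩
      · intro k
        by_cases hk : k = i
        · subst hk; rw [Function.update_self]; exact ⟨hj1, hj2⟩
        · rw [Function.update_of_ne hk]; exact hp0 k
      · rw [Finset.sum_insert hnot, Function.update_self]
        have hsum : ∑ k ∈ univ.filter (fun k : Fin d => k.val < t), X k * Function.update p0 i j k
            = ∑ k ∈ univ.filter (fun k : Fin d => k.val < t), X k * p0 k := by
          apply Finset.sum_congr rfl
          intro k hk
          have : k ≠ i := by
            simp only [Finset.mem_filter] at hk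
            intro h; rw [h] at hk; simp [hi_def] at hk
          rw [Function.update_of_ne this]
        have hp0y' : ∑ k ∈ univ.filter (fun k : Fin d => k.val < t), X k * p0 k = y := hp0y
        rw [hsum, hp0y']
        exact hxy.symm

/-- Mirror image version: partial sums over indices `≥ d - t`. -/
lemma keyY15 {d : ℕ} (a b : Fin d → ℤ) (hab : ∀ i, a i ≤ b i) (X : Fin d → ℤ) (t : ℕ) (ht : t ≤ d)
    (h0 : ∀ k : Fin d, d - t ≤ k.val → 0 ≤ X k)
    (hr : ∀ k : Fin d, d - t ≤ k.val →
      X k ≤ 1 + ∑ j ∈ univ.filter (fun j => k < j), X j * (b j - a j)) :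
    (fun p : Fin d → ℤ => ∑ k ∈ univ.filter (fun k : Fin d => d - t ≤ k.val), X k * p k) ''
        {p | ∀ i, a i ≤ p i ∧ p i ≤ b i}
      = Set.Icc (∑ k ∈ univ.filter (fun k : Fin d => d - t ≤ k.val), X k * a k)
                (∑ k ∈ univ.filter (fun k : Fin d => d - t ≤ k.val), X k * b k) := by
  induction t with
  | zero =>
    have hfil : univ.filter (fun k : Fin d => d - 0 ≤ k.val) = ∅ := by
      ext k; simp
    rw [hfil]
    simp only [Finset.sum_empty]
    have hne : ({p | ∀ i, a i ≤ p i ∧ p i ≤ b i} : Set (Fin d → ℤ)).Nonempty :=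
      ⟨a, fun i => ⟨le_refl _, hab i⟩⟩
    rw [Set.Icc_self]
    exact Set.Nonempty.image_const hne 0
  | succ t ih =>
    have ht' : d - (t + 1) < d := by omega
    set i : Fin d := ⟨d - (t + 1), ht'⟩ with hi_def
    have hfil : univ.filter (fun k : Fin d => d - (t + 1) ≤ k.val)
        = insert i (univ.filter (fun k : Fin d => d - t ≤ k.val)) := by
      ext k; simp [Fin.ext_iff, hi_def]; omega
    have hnot : i ∉ univ.filter (fun k : Fin d => d - t ≤ k.val) := by
      simp [hi_def]; omega
    have himg := ih (by omega) (fun k hk => h0 k (by omega)) (fun k hk => hr k (by omega))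
    set A := ∑ k ∈ univ.filter (fun k : Fin d => d - t ≤ k.val), X k * a k with hA
    set B := ∑ k ∈ univ.filter (fun k : Fin d => d - t ≤ k.val), X k * b k with hB
    have hAB : A ≤ B := by
      apply Finset.sum_le_sum
      intro k hk
      exact mul_le_mul_of_nonneg_left (hab k) (h0 k (by simp only [Finset.mem_filter] at hk; omega))
    have hXi0 : 0 ≤ X i := h0 i (by simp [hi_def])
    have hradi : X i ≤ 1 + B - A := by
      have h1 := hr i (by simp [hi_def])
      have h2 : univ.filter (fun j : Fin d => i < j) = univ.filter (fun k : Fin d => d - t ≤ k.val) := by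
        ext k; simp [Fin.lt_def, hi_def]; omega
      have h3 : ∑ j ∈ univ.filter (fun k : Fin d => d - t ≤ k.val), X j * (b j - a j) = B - A := by
        rw [hA, hB, ← Finset.sum_sub_distrib]
        apply Finset.sum_congr rfl; intro k _; ring
      rw [h2, h3] at h1
      omega
    have hlt : d - (t + 1) < d - t := by omega
    rw [hfil, Finset.sum_insert hnot, Finset.sum_insert hnot]
    ext x
    simp only [Set.mem_image, Set.mem_setOf_eq, Set.mem_Icc]
    constructor
    · rintro ⟨p, hp, rfl⟩
      rw [Finset.sum_insert hnot]
      have hmem : ∑ k ∈ univ.filter (fun k : Fin d => d - t ≤ k.val), X k * p k ∈ Set.Icc A B := by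
        rw [← himg]; exact ⟨p, hp, rfl⟩
      rw [Set.mem_Icc] at hmem
      constructor
      · exact add_le_add (mul_le_mul_of_nonneg_left (hp i).1 hXi0) hmem.1
      · exact add_le_add (mul_le_mul_of_nonneg_left (hp i).2 hXi0) hmem.2
    · rintro ⟨hx1, hx2⟩
      obtain ⟨j, y, hj1, hj2, hy1, hy2, hxy⟩ :=
        fill15 (X i) A B (a i) (b i) x hXi0 hAB (hab i) hradi hx1 hx2
      have hy : y ∈ Set.Icc A B := ⟨hy1, hy2⟩
      rw [← himg] at hy
      obtain ⟨p0, hp0, hp0y⟩ := hy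
      refine ⟨Function.update p0 i j, ?_, ?_⟩
      · intro k
        by_cases hk : k = i
        · subst hk; rw [Function.update_self]; exact ⟨hj1, hj2⟩
        · rw [Function.update_of_ne hk]; exact hp0 k
      · rw [Finset.sum_insert hnot, Function.update_self]
        have hsum : ∑ k ∈ univ.filter (fun k : Fin d => d - t ≤ k.val), X k * Function.update p0 i j k
            = ∑ k ∈ univ.filter (fun k : Fin d => d - t ≤ k.val), X k * p0 k := by
          apply Finset.sum_congr rfl
          intro k hk
          have hkv : d - t ≤ k.val := by simp only [Finset.mem_filter] at hk; exact hk.2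
          have hiv : i.val = d - (t + 1) := rfl
          have : k ≠ i := by intro h; rw [h, hiv] at hkv; exact absurd hkv (Nat.not_le.mpr hlt)
          rw [Function.update_of_ne this]
        have hp0y' : ∑ k ∈ univ.filter (fun k : Fin d => d - t ≤ k.val), X k * p0 k = y := hp0y
        rw [hsum, hp0y']
        exact hxy.symm

section slices
variable {d : ℕ} (a b : Fin d → ℤ)

/-- Nonemptiness of a slice of the box. -/
lemma slice_ne15 (hab : ∀ i, a i ≤ b i) (i : Fin d) (j : ℤ) :
    (lslice {p | ∀ i, a i ≤ p i ∧ p i ≤ b i} i j).Nonempty ↔ a i ≤ j ∧ j ≤ b i := by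
  constructor
  · rintro ⟨p, hp, hpj⟩
    rw [← hpj]; exact hp i
  · rintro ⟨h1, h2⟩
    refine ⟨Function.update a i j, ?_, Function.update_self i j a⟩
    intro k
    by_cases hk : k = i
    · subst hk; rw [Function.update_self]; exact ⟨h1, h2⟩
    · rw [Function.update_of_ne hk]; exact ⟨le_refl _, hab k⟩

/-- The xpart image over a slice is the xpart image over the whole box. -/
lemma slice_imgX15 (X : Fin d → ℤ) (i : Fin d) (j : ℤ) (h1 : a i ≤ j) (h2 : j ≤ b i) :
    xpart X i '' lslice {p | ∀ i, a i ≤ p i ∧ p i ≤ b i} i j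
      = xpart X i '' {p | ∀ i, a i ≤ p i ∧ p i ≤ b i} := by
  apply Set.Subset.antisymm
  · exact Set.image_mono (fun p hp => hp.1)
  · rintro _ ⟨p, hp, rfl⟩
    refine ⟨Function.update p i j, ⟨?_, Function.update_self i j p⟩, ?_⟩
    · intro k
      by_cases hk : k = i
      · subst hk; rw [Function.update_self]; exact ⟨h1, h2⟩
      · rw [Function.update_of_ne hk]; exact hp k
    · unfold xpart
      apply Finset.sum_congr rfl
      intro k hk
      have : k ≠ i := by
        simp only [Finset.mem_filter] at hk
        exact ne_of_lt hk.2
      rw [Function.update_of_ne this]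

/-- The ypart image over a slice is the ypart image over the whole box. -/
lemma slice_imgY15 (Y : Fin d → ℤ) (i : Fin d) (j : ℤ) (h1 : a i ≤ j) (h2 : j ≤ b i) :
    ypart Y i '' lslice {p | ∀ i, a i ≤ p i ∧ p i ≤ b i} i j
      = ypart Y i '' {p | ∀ i, a i ≤ p i ∧ p i ≤ b i} := by
  apply Set.Subset.antisymm
  · exact Set.image_mono (fun p hp => hp.1)
  · rintro _ ⟨p, hp, rfl⟩
    refine ⟨Function.update p i j, ⟨?_, Function.update_self i j p⟩, ?_⟩
    · intro k
      by_cases hk : k = i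
      · subst hk; rw [Function.update_self]; exact ⟨h1, h2⟩
      · rw [Function.update_of_ne hk]; exact hp k
    · unfold ypart
      apply Finset.sum_congr rfl
      intro k hk
      have : k ≠ i := by
        simp only [Finset.mem_filter] at hk
        exact (ne_of_lt hk.2).symm
      rw [Function.update_of_ne this]

end slices

/-- Properties of the x-multipliers on a box. -/
lemma Xgood15 {d : ℕ} (a b : Fin d → ℤ) (hab : ∀ i, a i ≤ b i) (X : Fin d → ℤ)
    (hX : XSpec {p | ∀ i, a i ≤ p i ∧ p i ≤ b i} X) :
    ∀ i : Fin d, 0 ≤ X i ∧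
      X i ≤ 1 + ∑ k ∈ univ.filter (fun k => k < i), X k * (b k - a k) ∧
      (i.val ≠ 0 → a i < b i →
        X i = 1 + ∑ k ∈ univ.filter (fun k => k < i), X k * (b k - a k)) := by
  suffices h : ∀ n : ℕ, ∀ i : Fin d, i.val < n → (0 ≤ X i ∧
      X i ≤ 1 + ∑ k ∈ univ.filter (fun k => k < i), X k * (b k - a k) ∧
      (i.val ≠ 0 → a i < b i →
        X i = 1 + ∑ k ∈ univ.filter (fun k => k < i), X k * (b k - a k))) by
    exact fun i => h (i.val + 1) i (Nat.lt_succ_self _)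
  intro n
  induction n with
  | zero => exact fun i hi => absurd hi (Nat.not_lt_zero _)
  | succ n ihn =>
    intro i hi
    by_cases hn : i.val < n
    · exact ihn i hn
    · have hin : i.val = n := by omega
      have IH : ∀ j : Fin d, j < i → (0 ≤ X j ∧
          X j ≤ 1 + ∑ k ∈ univ.filter (fun k => k < j), X k * (b k - a k) ∧
          (j.val ≠ 0 → a j < b j →
            X j = 1 + ∑ k ∈ univ.filter (fun k => k < j), X k * (b k - a k))) :=
        fun j hj => ihn j (by rw [Fin.lt_def, hin] at hj; exact hj)
      have hE0 : 0 ≤ ∑ k ∈ univ.filter (fun k => k < i), X k * (b k - a k) := by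
        apply Finset.sum_nonneg
        intro k hk
        have hki : k < i := (Finset.mem_filter.mp hk).2
        exact mul_nonneg (IH k hki).1 (by linarith [hab k])
      by_cases hi0 : i.val = 0
      · have hXi : X i = 0 := hX.1 i hi0
        exact ⟨le_of_eq hXi.symm, by rw [hXi]; linarith,
          fun h _ => absurd hi0 h⟩
      · have hspec := hX.2 i hi0
        have himg := keyX15 a b hab X i.val i.isLt.le
          (fun k hk => (IH k (Fin.lt_def.mpr hk)).1)
          (fun k hk => (IH k (Fin.lt_def.mpr hk)).2.1)
        have hfil2 : univ.filter (fun k : Fin d => k.val < i.val)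
            = univ.filter (fun k : Fin d => k < i) := by
          ext k
          simp only [Finset.mem_filter, Finset.mem_univ, true_and, Fin.lt_def]
        rw [hfil2] at himg
        set A := ∑ k ∈ univ.filter (fun k : Fin d => k < i), X k * a k with hA
        set B := ∑ k ∈ univ.filter (fun k : Fin d => k < i), X k * b k with hB
        have himg2 : xpart X i '' {p | ∀ i, a i ≤ p i ∧ p i ≤ b i} = Set.Icc A B := himg
        have hAB : A ≤ B := by
          apply Finset.sum_le_sum
          intro k hk
          exact mul_le_mul_of_nonneg_left (hab k) (IH k (Finset.mem_filter.mp hk).2).1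
        have hEB : B - A = ∑ k ∈ univ.filter (fun k => k < i), X k * (b k - a k) := by
          rw [hA, hB, ← Finset.sum_sub_distrib]
          apply Finset.sum_congr rfl; intro k _; ring
        by_cases hioo : a i < b i
        · have hZ : {z : ℤ | ∃ j : ℤ,
              (lslice {p | ∀ i, a i ≤ p i ∧ p i ≤ b i} i j).Nonempty ∧
              (lslice {p | ∀ i, a i ≤ p i ∧ p i ≤ b i} i (j - 1)).Nonempty ∧
              z = 1 + sSup (xpart X i '' lslice {p | ∀ i, a i ≤ p i ∧ p i ≤ b i} i (j - 1))
                - sInf (xpart X i '' lslice {p | ∀ i, a i ≤ p i ∧ p i ≤ b i} i j)}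
              = {1 + B - A} := by
            ext z
            simp only [Set.mem_setOf_eq, Set.mem_singleton_iff]
            constructor
            · rintro ⟨j, hne1, hne2, rfl⟩
              rw [slice_ne15 a b hab] at hne1 hne2
              rw [slice_imgX15 a b X i j hne1.1 hne1.2,
                slice_imgX15 a b X i (j - 1) hne2.1 hne2.2, himg2,
                csSup_Icc hAB, csInf_Icc hAB]
            · rintro rfl
              refine ⟨a i + 1, ?_, ?_, ?_⟩
              · rw [slice_ne15 a b hab]; constructor <;> linarith
              · rw [slice_ne15 a b hab]; constructor <;> linarith
              · rw [slice_imgX15 a b X i (a i + 1) (by linarith) (by linarith),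
                  slice_imgX15 a b X i (a i + 1 - 1) (by linarith) (by linarith), himg2,
                  csSup_Icc hAB, csInf_Icc hAB]
          rw [hZ, csSup_singleton] at hspec
          have hspec' : X i = 1 + (B - A) := by linarith
          rw [← hEB]
          exact ⟨by linarith, le_of_eq hspec', fun _ _ => hspec'⟩
        · have hZ : {z : ℤ | ∃ j : ℤ,
              (lslice {p | ∀ i, a i ≤ p i ∧ p i ≤ b i} i j).Nonempty ∧
              (lslice {p | ∀ i, a i ≤ p i ∧ p i ≤ b i} i (j - 1)).Nonempty ∧
              z = 1 + sSup (xpart X i '' lslice {p | ∀ i, a i ≤ p i ∧ p i ≤ b i} i (j - 1))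
                - sInf (xpart X i '' lslice {p | ∀ i, a i ≤ p i ∧ p i ≤ b i} i j)}
              = (∅ : Set ℤ) := by
            ext z
            simp only [Set.mem_setOf_eq, Set.mem_empty_iff_false, iff_false]
            rintro ⟨j, hne1, hne2, _⟩
            rw [slice_ne15 a b hab] at hne1 hne2
            exact hioo (by linarith [hne1.2, hne2.1])
          rw [hZ, Int.csSup_empty] at hspec
          exact ⟨le_of_eq hspec.symm, by rw [hspec]; linarith,
            fun _ h => absurd h hioo⟩

/-- Properties of the y-multipliers on a box. -/
lemma Ygood15 {d : ℕ} (a b : Fin d → ℤ) (hab : ∀ i, a i ≤ b i) (Y : Fin d → ℤ)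
    (hY : YSpec {p | ∀ i, a i ≤ p i ∧ p i ≤ b i} Y) :
    ∀ i : Fin d, 0 ≤ Y i ∧
      Y i ≤ 1 + ∑ k ∈ univ.filter (fun k => i < k), Y k * (b k - a k) ∧
      (i.val ≠ d - 1 → a i < b i →
        Y i = 1 + ∑ k ∈ univ.filter (fun k => i < k), Y k * (b k - a k)) := by
  suffices h : ∀ n : ℕ, ∀ i : Fin d, d - 1 - i.val < n → (0 ≤ Y i ∧
      Y i ≤ 1 + ∑ k ∈ univ.filter (fun k => i < k), Y k * (b k - a k) ∧
      (i.val ≠ d - 1 → a i < b i →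
        Y i = 1 + ∑ k ∈ univ.filter (fun k => i < k), Y k * (b k - a k))) by
    exact fun i => h (d - 1 - i.val + 1) i (Nat.lt_succ_self _)
  intro n
  induction n with
  | zero => exact fun i hi => absurd hi (Nat.not_lt_zero _)
  | succ n ihn =>
    intro i hi
    by_cases hn : d - 1 - i.val < n
    · exact ihn i hn
    · have hin : d - 1 - i.val = n := by omega
      have IH : ∀ j : Fin d, i < j → (0 ≤ Y j ∧
          Y j ≤ 1 + ∑ k ∈ univ.filter (fun k => j < k), Y k * (b k - a k) ∧
          (j.val ≠ d - 1 → a j < b j →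
            Y j = 1 + ∑ k ∈ univ.filter (fun k => j < k), Y k * (b k - a k))) :=
        fun j hj => ihn j (by rw [Fin.lt_def] at hj; have := j.isLt; omega)
      have hE0 : 0 ≤ ∑ k ∈ univ.filter (fun k => i < k), Y k * (b k - a k) := by
        apply Finset.sum_nonneg
        intro k hk
        have hki : i < k := (Finset.mem_filter.mp hk).2
        exact mul_nonneg (IH k hki).1 (by linarith [hab k])
      by_cases hi0 : i.val = d - 1
      · have hYi : Y i = 0 := hY.1 i hi0
        exact ⟨le_of_eq hYi.symm, by rw [hYi]; linarith,
          fun h _ => absurd hi0 h⟩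
      · have hdt : d - (d - i.val - 1) = i.val + 1 := by have := i.isLt; omega
        have himg := keyY15 a b hab Y (d - i.val - 1) (by omega)
          (fun k hk => (IH k (Fin.lt_def.mpr (by omega))).1)
          (fun k hk => (IH k (Fin.lt_def.mpr (by omega))).2.1)
        have hfil2 : univ.filter (fun k : Fin d => d - (d - i.val - 1) ≤ k.val)
            = univ.filter (fun k : Fin d => i < k) := by
          ext k
          simp only [Finset.mem_filter, Finset.mem_univ, true_and, Fin.lt_def]
          omega
        rw [hfil2] at himg
        set A := ∑ k ∈ univ.filter (fun k : Fin d => i < k), Y k * a k with hA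
        set B := ∑ k ∈ univ.filter (fun k : Fin d => i < k), Y k * b k with hB
        have himg2 : ypart Y i '' {p | ∀ i, a i ≤ p i ∧ p i ≤ b i} = Set.Icc A B := himg
        have hAB : A ≤ B := by
          apply Finset.sum_le_sum
          intro k hk
          exact mul_le_mul_of_nonneg_left (hab k) (IH k (Finset.mem_filter.mp hk).2).1
        have hEB : B - A = ∑ k ∈ univ.filter (fun k => i < k), Y k * (b k - a k) := by
          rw [hA, hB, ← Finset.sum_sub_distrib]
          apply Finset.sum_congr rfl; intro k _; ring
        have hspec := hY.2 i hi0
        by_cases hioo : a i < b i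
        · have hZ : {z : ℤ | ∃ j : ℤ,
              (lslice {p | ∀ i, a i ≤ p i ∧ p i ≤ b i} i j).Nonempty ∧
              (lslice {p | ∀ i, a i ≤ p i ∧ p i ≤ b i} i (j - 1)).Nonempty ∧
              z = 1 + sSup (ypart Y i '' lslice {p | ∀ i, a i ≤ p i ∧ p i ≤ b i} i (j - 1))
                - sInf (ypart Y i '' lslice {p | ∀ i, a i ≤ p i ∧ p i ≤ b i} i j)}
              = {1 + B - A} := by
            ext z
            simp only [Set.mem_setOf_eq, Set.mem_singleton_iff]
            constructor
            · rintro ⟨j, hne1, hne2, rfl⟩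
              rw [slice_ne15 a b hab] at hne1 hne2
              rw [slice_imgY15 a b Y i j hne1.1 hne1.2,
                slice_imgY15 a b Y i (j - 1) hne2.1 hne2.2, himg2,
                csSup_Icc hAB, csInf_Icc hAB]
            · rintro rfl
              refine ⟨a i + 1, ?_, ?_, ?_⟩
              · rw [slice_ne15 a b hab]; constructor <;> linarith
              · rw [slice_ne15 a b hab]; constructor <;> linarith
              · rw [slice_imgY15 a b Y i (a i + 1) (by linarith) (by linarith),
                  slice_imgY15 a b Y i (a i + 1 - 1) (by linarith) (by linarith), himg2,
                  csSup_Icc hAB, csInf_Icc hAB]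
          rw [hZ, csSup_singleton] at hspec
          have hspec' : Y i = 1 + (B - A) := by linarith
          rw [← hEB]
          exact ⟨by linarith, le_of_eq hspec', fun _ _ => hspec'⟩
        · have hZ : {z : ℤ | ∃ j : ℤ,
              (lslice {p | ∀ i, a i ≤ p i ∧ p i ≤ b i} i j).Nonempty ∧
              (lslice {p | ∀ i, a i ≤ p i ∧ p i ≤ b i} i (j - 1)).Nonempty ∧
              z = 1 + sSup (ypart Y i '' lslice {p | ∀ i, a i ≤ p i ∧ p i ≤ b i} i (j - 1))
                - sInf (ypart Y i '' lslice {p | ∀ i, a i ≤ p i ∧ p i ≤ b i} i j)}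
              = (∅ : Set ℤ) := by
            ext z
            simp only [Set.mem_setOf_eq, Set.mem_empty_iff_false, iff_false]
            rintro ⟨j, hne1, hne2, _⟩
            rw [slice_ne15 a b hab] at hne1 hne2
            exact hioo (by linarith [hne1.2, hne2.1])
          rw [hZ, Int.csSup_empty] at hspec
          exact ⟨le_of_eq hspec.symm, by rw [hspec]; linarith,
            fun _ h => absurd h hioo⟩

/-- Product formula for the x-extent. -/
lemma prodX15 {d : ℕ} (a b : Fin d → ℤ) (hab : ∀ i, a i ≤ b i) (X : Fin d → ℤ)
    (h0 : ∀ i : Fin d, i.val = 0 → X i = 0)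
    (hg : ∀ i : Fin d, i.val ≠ 0 → a i < b i →
        X i = 1 + ∑ k ∈ univ.filter (fun k => k < i), X k * (b k - a k)) :
    ∀ t, t ≤ d → 1 + ∑ k ∈ univ.filter (fun k : Fin d => k.val < t), X k * (b k - a k)
      = ∏ k ∈ univ.filter (fun k : Fin d => k.val < t ∧ k.val ≠ 0 ∧ a k < b k),
          (b k - a k + 1) := by
  intro t
  induction t with
  | zero =>
    intro _
    have h1 : univ.filter (fun k : Fin d => k.val < 0) = ∅ := by ext k; simp
    have h2 : univ.filter (fun k : Fin d => k.val < 0 ∧ k.val ≠ 0 ∧ a k < b k) = ∅ := by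
      ext k; simp
    rw [h1, h2]; simp
  | succ t ih =>
    intro ht
    have ht' : t < d := ht
    have ihe := ih (le_of_lt ht')
    set i : Fin d := ⟨t, ht'⟩ with hi_def
    have hiv : i.val = t := rfl
    have hfil : univ.filter (fun k : Fin d => k.val < t + 1)
        = insert i (univ.filter (fun k : Fin d => k.val < t)) := by
      ext k; simp [Fin.ext_iff, hi_def]; omega
    have hnot : i ∉ univ.filter (fun k : Fin d => k.val < t) := by simp [hi_def]
    rw [hfil, Finset.sum_insert hnot]
    by_cases hc : t ≠ 0 ∧ a i < b i
    · have hXi : X i = 1 + ∑ k ∈ univ.filter (fun k : Fin d => k.val < t), X k * (b k - a k) := by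
        have := hg i (by rw [hiv]; exact hc.1) hc.2
        rw [this]
        congr 1
      have hfilP : univ.filter (fun k : Fin d => k.val < t + 1 ∧ k.val ≠ 0 ∧ a k < b k)
          = insert i (univ.filter (fun k : Fin d => k.val < t ∧ k.val ≠ 0 ∧ a k < b k)) := by
        ext k
        simp only [Finset.mem_filter, Finset.mem_univ, true_and, Finset.mem_insert]
        constructor
        · rintro ⟨h1, h2, h3⟩
          rcases (by omega : k.val < t ∨ k.val = t) with h | h
          · exact Or.inr ⟨h, h2, h3⟩
          · exact Or.inl (Fin.ext (by rw [h, hiv]))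
        · rintro (h | ⟨h1, h2, h3⟩)
          · subst h
            exact ⟨by omega, by rw [hiv]; exact hc.1, hc.2⟩
          · exact ⟨by omega, h2, h3⟩
      have hnotP : i ∉ univ.filter (fun k : Fin d => k.val < t ∧ k.val ≠ 0 ∧ a k < b k) := by
        simp [hi_def]
      rw [hfilP, Finset.prod_insert hnotP, ← ihe, hXi]
      ring
    · have hterm : X i * (b i - a i) = 0 := by
        by_cases h : t = 0
        · rw [h0 i (by rw [hiv]; exact h)]; ring
        · have heq : a i = b i := by
            push_neg at hc
            exact le_antisymm (hab i) (hc h)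
          rw [heq]; ring
      have hfilP : univ.filter (fun k : Fin d => k.val < t + 1 ∧ k.val ≠ 0 ∧ a k < b k)
          = univ.filter (fun k : Fin d => k.val < t ∧ k.val ≠ 0 ∧ a k < b k) := by
        ext k
        simp only [Finset.mem_filter, Finset.mem_univ, true_and]
        constructor
        · rintro ⟨h1, h2, h3⟩
          rcases (by omega : k.val < t ∨ k.val = t) with h | h
          · exact ⟨h, h2, h3⟩
          · exfalso
            have hki : k = i := Fin.ext (by rw [h, hiv])
            apply hc
            exact ⟨h ▸ h2, hki ▸ h3⟩
        · rintro ⟨h1, h2, h3⟩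
          exact ⟨by omega, h2, h3⟩
      rw [hfilP, hterm, ← ihe]
      ring

/-- Product formula for the y-extent. -/
lemma prodY15 {d : ℕ} (a b : Fin d → ℤ) (hab : ∀ i, a i ≤ b i) (Y : Fin d → ℤ)
    (h0 : ∀ i : Fin d, i.val = d - 1 → Y i = 0)
    (hg : ∀ i : Fin d, i.val ≠ d - 1 → a i < b i →
        Y i = 1 + ∑ k ∈ univ.filter (fun k => i < k), Y k * (b k - a k)) :
    ∀ t, t ≤ d → 1 + ∑ k ∈ univ.filter (fun k : Fin d => d - t ≤ k.val), Y k * (b k - a k)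
      = ∏ k ∈ univ.filter (fun k : Fin d => d - t ≤ k.val ∧ k.val ≠ d - 1 ∧ a k < b k),
          (b k - a k + 1) := by
  intro t
  induction t with
  | zero =>
    intro _
    have h1 : univ.filter (fun k : Fin d => d - 0 ≤ k.val) = ∅ := by ext k; simp
    have h2 : univ.filter (fun k : Fin d => d - 0 ≤ k.val ∧ k.val ≠ d - 1 ∧ a k < b k) = ∅ := by
      ext k; simp
    rw [h1, h2]; simp
  | succ t ih =>
    intro ht
    have ht' : d - (t + 1) < d := by omega
    have ihe := ih (by omega)
    set i : Fin d := ⟨d - (t + 1), ht'⟩ with hi_def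
    have hiv : i.val = d - (t + 1) := rfl
    have hfil : univ.filter (fun k : Fin d => d - (t + 1) ≤ k.val)
        = insert i (univ.filter (fun k : Fin d => d - t ≤ k.val)) := by
      ext k; simp [Fin.ext_iff, hi_def]; omega
    have hnot : i ∉ univ.filter (fun k : Fin d => d - t ≤ k.val) := by
      simp [hi_def]; omega
    rw [hfil, Finset.sum_insert hnot]
    by_cases hc : t ≠ 0 ∧ a i < b i
    · have hYi : Y i = 1 + ∑ k ∈ univ.filter (fun k : Fin d => d - t ≤ k.val),
          Y k * (b k - a k) := by
        have hne : i.val ≠ d - 1 := by rw [hiv]; have := hc.1; omega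
        have hthis := hg i hne hc.2
        have hfilsum : univ.filter (fun k : Fin d => i < k)
            = univ.filter (fun k : Fin d => d - t ≤ k.val) := by
          ext k
          simp only [Finset.mem_filter, Finset.mem_univ, true_and, Fin.lt_def, hiv]
          omega
        rw [hfilsum] at hthis
        exact hthis
      have hfilP : univ.filter (fun k : Fin d => d - (t + 1) ≤ k.val ∧ k.val ≠ d - 1 ∧ a k < b k)
          = insert i (univ.filter (fun k : Fin d => d - t ≤ k.val ∧ k.val ≠ d - 1 ∧ a k < b k)) := by
        ext k
        simp only [Finset.mem_filter, Finset.mem_univ, true_and, Finset.mem_insert]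
        constructor
        · rintro ⟨h1, h2, h3⟩
          rcases (by omega : d - t ≤ k.val ∨ k.val = d - (t + 1)) with h | h
          · exact Or.inr ⟨h, h2, h3⟩
          · exact Or.inl (Fin.ext (by rw [h, hiv]))
        · rintro (h | ⟨h1, h2, h3⟩)
          · subst h
            refine ⟨le_refl _, by rw [hiv]; have := hc.1; omega, hc.2⟩
          · exact ⟨by omega, h2, h3⟩
      have hnotP : i ∉ univ.filter
          (fun k : Fin d => d - t ≤ k.val ∧ k.val ≠ d - 1 ∧ a k < b k) := by
        simp [hi_def]; intro h; omega
      rw [hfilP, Finset.prod_insert hnotP, ← ihe, hYi]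
      ring
    · have hterm : Y i * (b i - a i) = 0 := by
        by_cases h : t = 0
        · rw [h0 i (by rw [hiv, h])]; ring
        · have heq : a i = b i := by
            push_neg at hc
            exact le_antisymm (hab i) (hc h)
          rw [heq]; ring
      have hfilP : univ.filter (fun k : Fin d => d - (t + 1) ≤ k.val ∧ k.val ≠ d - 1 ∧ a k < b k)
          = univ.filter (fun k : Fin d => d - t ≤ k.val ∧ k.val ≠ d - 1 ∧ a k < b k) := by
        ext k
        simp only [Finset.mem_filter, Finset.mem_univ, true_and]
        constructor
        · rintro ⟨h1, h2, h3⟩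
          rcases (by omega : d - t ≤ k.val ∨ k.val = d - (t + 1)) with h | h
          · exact ⟨h, h2, h3⟩
          · exfalso
            have hki : k = i := Fin.ext (by rw [h, hiv])
            apply hc
            constructor
            · omega
            · exact hki ▸ h3
        · rintro ⟨h1, h2, h3⟩
          exact ⟨by omega, h2, h3⟩
      rw [hfilP, hterm, ← ihe]
      ring

/-- Applied to a box `L = [a_0,b_0] × ⋯ × [a_{d-1},b_{d-1}] ∩ ℤ^d`, the projection
`p ↦ (X·p, Y·p)` produces images occupying a contiguous range of integer
x-coordinates and a contiguous range of integer y-coordinates, so the drawing fits in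
a bounding box of area at most `n²` where `n = |L|`. -/
theorem stmt_15 {d : ℕ} (a b : Fin d → ℤ) (hab : ∀ i, a i ≤ b i)
    (L : Set (Fin d → ℤ)) (hbox : L = {p | ∀ i, p i ∈ Set.Icc (a i) (b i)})
    (X Y : Fin d → ℤ) (hX : XSpec L X) (hY : YSpec L Y) :
    ∃ xlo xhi ylo yhi : ℤ,
      (fun p : Fin d → ℤ => ∑ k, X k * p k) '' L = Set.Icc xlo xhi ∧
      (fun p : Fin d → ℤ => ∑ k, Y k * p k) '' L = Set.Icc ylo yhi ∧
      (xhi - xlo + 1) * (yhi - ylo + 1) ≤ (Nat.card L : ℤ) ^ 2 := by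
  have hL : L = {p | ∀ i, a i ≤ p i ∧ p i ≤ b i} := by
    rw [hbox]; ext p; simp [Set.mem_Icc]
  rw [hL] at hX hY
  have hGX := Xgood15 a b hab X hX
  have hGY := Ygood15 a b hab Y hY
  -- full-index filters
  have hfildX : univ.filter (fun k : Fin d => k.val < d) = univ := by
    ext k; simp [k.isLt]
  have hfildY : univ.filter (fun k : Fin d => d - d ≤ k.val) = univ := by
    ext k; simp
  -- images
  have himgX := keyX15 a b hab X d (le_refl d) (fun k _ => (hGX k).1)
    (fun k _ => (hGX k).2.1)
  rw [hfildX] at himgX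
  have himgY := keyY15 a b hab Y d (le_refl d) (fun k _ => (hGY k).1)
    (fun k _ => (hGY k).2.1)
  rw [hfildY] at himgY
  refine ⟨∑ k, X k * a k, ∑ k, X k * b k, ∑ k, Y k * a k, ∑ k, Y k * b k,
    by rw [hL]; exact himgX, by rw [hL]; exact himgY, ?_⟩
  -- widths as products
  have hsubX : ∑ k, X k * b k - ∑ k, X k * a k = ∑ k : Fin d, X k * (b k - a k) := by
    rw [← Finset.sum_sub_distrib]; apply Finset.sum_congr rfl; intro k _; ring
  have hsubY : ∑ k, Y k * b k - ∑ k, Y k * a k = ∑ k : Fin d, Y k * (b k - a k) := by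
    rw [← Finset.sum_sub_distrib]; apply Finset.sum_congr rfl; intro k _; ring
  have hwX := prodX15 a b hab X hX.1 (fun i h1 h2 => (hGX i).2.2 h1 h2) d (le_refl d)
  rw [hfildX] at hwX
  have hwY := prodY15 a b hab Y hY.1 (fun i h1 h2 => (hGY i).2.2 h1 h2) d (le_refl d)
  rw [hfildY] at hwY
  set SX := univ.filter (fun k : Fin d => k.val < d ∧ k.val ≠ 0 ∧ a k < b k) with hSX
  set SY := univ.filter (fun k : Fin d => d - d ≤ k.val ∧ k.val ≠ d - 1 ∧ a k < b k) with hSY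
  have hWx : ∑ k, X k * b k - ∑ k, X k * a k + 1 = ∏ k ∈ SX, (b k - a k + 1) := by
    rw [hsubX, ← hwX]; ring
  have hWy : ∑ k, Y k * b k - ∑ k, Y k * a k + 1 = ∏ k ∈ SY, (b k - a k + 1) := by
    rw [hsubY, ← hwY]; ring
  -- cardinality
  have hbox2 : ({p | ∀ i, a i ≤ p i ∧ p i ≤ b i} : Set (Fin d → ℤ)) = Set.Icc a b := by
    ext p
    simp only [Set.mem_setOf_eq, Set.mem_Icc, Pi.le_def]
    exact ⟨fun h => ⟨fun i => (h i).1, fun i => (h i).2⟩, fun h i => ⟨h.1 i, h.2 i⟩⟩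
  have hN : (Nat.card L : ℤ) = ∏ k : Fin d, (b k - a k + 1) := by
    rw [hL, hbox2, ← Finset.coe_Icc, Nat.card_coe_set_eq, Set.ncard_coe_finset, Pi.card_Icc,
      Nat.cast_prod]
    apply Finset.prod_congr rfl
    intro k _
    rw [Int.card_Icc, Int.toNat_of_nonneg (by linarith [hab k])]
    ring
  -- comparing products
  have hone : ∀ s : Finset (Fin d), (1 : ℤ) ≤ ∏ k ∈ s, (b k - a k + 1) := by
    intro s
    calc (1 : ℤ) = ∏ k ∈ s, 1 := (Finset.prod_const_one).symm
    _ ≤ ∏ k ∈ s, (b k - a k + 1) :=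
        Finset.prod_le_prod (fun k _ => zero_le_one) (fun k _ => by linarith [hab k])
  have hles : ∀ s : Finset (Fin d),
      ∏ k ∈ s, (b k - a k + 1) ≤ ∏ k : Fin d, (b k - a k + 1) := by
    intro s
    have hsd := Finset.prod_sdiff (Finset.subset_univ s)
      (f := fun k => (b k - a k + 1))
    rw [← hsd]
    have h1 := hone (univ \ s)
    have h2 : (0 : ℤ) ≤ ∏ k ∈ s, (b k - a k + 1) := by linarith [hone s]
    nlinarith
  rw [hN, hWx, hWy, sq]
  exact mul_le_mul (hles SX) (hles SY) (by linarith [hone SY]) (by linarith [hone univ])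
end
end

section
/- A closed polygonal curve in the plane all of whose turning angles at vertices are strictly positive (left turns) and whose total turning is exactly 360 degrees is the boundary of a strictly convex polygon; in particular it is simple (non-self-crossing). -/
/-- The planar cross product of two vectors in `ℂ ≅ ℝ²`. -/
def cross (a b : ℂ) : ℝ := a.re * b.im - a.im * b.re

lemma p18_cross_add (a b c : ℂ) : cross a (b + c) = cross a b + cross a c := by
  simp [cross]; ring

lemma p18_cross_sum (a : ℂ) (s : Finset ℕ) (f : ℕ → ℂ) :
    cross a (∑ t ∈ s, f t) = ∑ t ∈ s, cross a (f t) := by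
  induction s using Finset.cons_induction with
  | empty => simp [cross]
  | cons x s hx ih => rw [Finset.sum_cons, Finset.sum_cons, p18_cross_add, ih]

lemma p18_cross_mul_self (a c : ℂ) : cross a (c * a) = Complex.normSq a * c.im := by
  simp [cross, Complex.mul_re, Complex.mul_im, Complex.normSq_apply]; ring

lemma p18_cross_zero (a : ℂ) : cross a 0 = 0 := by simp [cross]

lemma p18_cross_self (a : ℂ) : cross a a = 0 := by simp [cross]; ring

lemma p18_cross_smul (a : ℂ) (r : ℝ) (b : ℂ) : cross a (r • b) = r * cross a b := by
  simp [cross, Complex.real_smul, Complex.mul_re, Complex.mul_im]; ring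

/-- Key lemma: every other vertex lies strictly to the left of each directed edge. -/
lemma p18_key {k : ℕ} [NeZero k] (hk : 3 ≤ k) (v : ZMod k → ℂ)
    (hne : ∀ i : ZMod k, v (i + 1) ≠ v i)
    (hpos : ∀ i : ZMod k, 0 < Complex.arg ((v (i + 1) - v i) / (v i - v (i - 1))))
    (hlt : ∀ i : ZMod k, Complex.arg ((v (i + 1) - v i) / (v i - v (i - 1))) ≠ Real.pi)
    (hsum : ∑ i : ZMod k, Complex.arg ((v (i + 1) - v i) / (v i - v (i - 1))) =
      2 * Real.pi) :
    ∀ i j : ZMod k, j ≠ i → j ≠ i + 1 → 0 < cross (v (i + 1) - v i) (v j - v i) := by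
  set e : ZMod k → ℂ := fun t => v (t + 1) - v t with he_def
  have he : ∀ t, e t ≠ 0 := fun t => sub_ne_zero.mpr (hne t)
  set θ : ZMod k → ℝ := fun t => Complex.arg (e t / e (t - 1)) with hθ_def
  have hθeq : ∀ t : ZMod k, θ t = Complex.arg ((v (t + 1) - v t) / (v t - v (t - 1))) := by
    intro t
    have h2 : t - 1 + 1 = t := by ring
    simp only [hθ_def, he_def, h2]
  have hθpos : ∀ t, 0 < θ t := fun t => (hθeq t) ▸ hpos t
  have hθlt : ∀ t, θ t < Real.pi := fun t =>
    lt_of_le_of_ne (Complex.arg_le_pi _) (by rw [hθeq t]; exact hlt t)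
  have hθsum : ∑ t : ZMod k, θ t = 2 * Real.pi := by
    rw [show (∑ t : ZMod k, θ t) = ∑ t : ZMod k,
      Complex.arg ((v (t + 1) - v t) / (v t - v (t - 1))) from
      Finset.sum_congr rfl (fun t _ => hθeq t)]
    exact hsum
  intro i j hji hji1
  -- cumulative angles
  set α : ℕ → ℝ := fun m => ∑ t ∈ Finset.range m, θ (i + (t : ZMod k) + 1) with hα_def
  have hα0 : α 0 = 0 := by simp [hα_def]
  have hαsucc : ∀ m, α (m + 1) = α m + θ (i + (m : ZMod k) + 1) := by
    intro m; simp [hα_def, Finset.sum_range_succ]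
  have hmono : StrictMono α := strictMono_nat_of_lt_succ (fun m => by
    rw [hαsucc]; linarith [hθpos (i + (m : ZMod k) + 1)])
  -- representation of edges
  have hrep : ∀ m : ℕ, ∃ ρ : ℝ, 0 < ρ ∧
      e (i + (m : ZMod k)) = (ρ : ℂ) * Complex.exp (α m * Complex.I) * e i := by
    intro m
    induction m with
    | zero => exact ⟨1, one_pos, by simp [hα0]⟩
    | succ m ih =>
      obtain ⟨ρ, hρ, hrep⟩ := ih
      have hz0 : e (i + (m : ZMod k) + 1) / e (i + (m : ZMod k)) ≠ 0 :=
        div_ne_zero (he _) (he _)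
      have hargz : Complex.arg (e (i + (m : ZMod k) + 1) / e (i + (m : ZMod k)))
          = θ (i + (m : ZMod k) + 1) := by
        simp only [hθ_def, add_sub_cancel_right]
      obtain ⟨r, hr0, hzeq⟩ : ∃ r : ℝ, 0 < r ∧ e (i + (m : ZMod k) + 1) / e (i + (m : ZMod k))
          = (r : ℂ) * Complex.exp (θ (i + (m : ZMod k) + 1) * Complex.I) :=
        ⟨‖e (i + (m : ZMod k) + 1) / e (i + (m : ZMod k))‖,
          norm_pos_iff.mpr hz0, by rw [← hargz, Complex.norm_mul_exp_arg_mul_I]⟩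
      refine ⟨r * ρ, mul_pos hr0 hρ, ?_⟩
      have hcast : ((m + 1 : ℕ) : ZMod k) = (m : ZMod k) + 1 := by push_cast; ring
      have hmul : e (i + ((m + 1 : ℕ) : ZMod k))
          = (e (i + (m : ZMod k) + 1) / e (i + (m : ZMod k))) * e (i + (m : ZMod k)) := by
        rw [hcast, ← add_assoc, div_mul_cancel₀ _ (he _)]
      rw [hmul, hzeq, hrep, hαsucc, Complex.ofReal_mul, Complex.ofReal_add, add_mul,
        Complex.exp_add]
      ring
  -- the increments
  set d : ℕ → ℝ := fun t => cross (e i) (e (i + (t : ZMod k))) with hd_def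
  have hd : ∀ t, ∃ c : ℝ, 0 < c ∧ d t = c * Real.sin (α t) := by
    intro t
    obtain ⟨ρ, hρ, hrept⟩ := hrep t
    refine ⟨Complex.normSq (e i) * ρ, mul_pos (Complex.normSq_pos.mpr (he i)) hρ, ?_⟩
    simp only [hd_def, hrept, mul_assoc]
    rw [show (ρ : ℂ) * (Complex.exp ((α t : ℝ) * Complex.I) * e i)
        = ((ρ : ℂ) * Complex.exp ((α t : ℝ) * Complex.I)) * e i by ring]
    rw [p18_cross_mul_self]
    simp only [Complex.mul_im, Complex.ofReal_re, Complex.ofReal_im,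
      Complex.exp_ofReal_mul_I_im, Complex.exp_ofReal_mul_I_re]
    ring
  -- total sum of angles
  have hsum_shift : ∑ t ∈ Finset.range k, θ (i + (t : ZMod k) + 1) = 2 * Real.pi := by
    rw [← hθsum]
    refine Finset.sum_nbij' (i := fun t : ℕ => i + (t : ZMod k) + 1)
      (j := fun x : ZMod k => (x - i - 1).val) ?_ ?_ ?_ ?_ ?_
    · intro a _; exact Finset.mem_univ _
    · intro x _; exact Finset.mem_range.mpr (ZMod.val_lt _)
    · intro a ha
      rw [Finset.mem_range] at ha
      show (i + (a : ZMod k) + 1 - i - 1).val = a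
      have h : i + (a : ZMod k) + 1 - i - 1 = (a : ZMod k) := by ring
      rw [h]
      exact ZMod.val_cast_of_lt ha
    · intro x _
      show i + (((x - i - 1).val : ℕ) : ZMod k) + 1 = x
      rw [ZMod.natCast_rightInverse (x - i - 1)]
      ring
    · intro a _; rfl
  have hαtop : α (k - 1) = 2 * Real.pi - θ i := by
    have hk1 : k - 1 + 1 = k := by omega
    have h2 : α (k - 1 + 1) = α (k - 1) + θ (i + ((k - 1 : ℕ) : ZMod k) + 1) := hαsucc _
    have h3 : (i + ((k - 1 : ℕ) : ZMod k) + 1) = i := by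
      have hh : ((k - 1 : ℕ) : ZMod k) + 1 = ((k : ℕ) : ZMod k) := by
        rw [show ((k : ℕ) : ZMod k) = ((k - 1 + 1 : ℕ) : ZMod k) by rw [hk1]]
        push_cast; ring
      rw [add_assoc, hh, ZMod.natCast_self, add_zero]
    have h4 : α k = 2 * Real.pi := hsum_shift
    rw [hk1, h4, h3] at h2
    linarith
  -- vertex differences
  have hv : ∀ n : ℕ, v (i + (n : ZMod k)) - v i = ∑ t ∈ Finset.range n, e (i + (t : ZMod k)) := by
    intro n
    induction n with
    | zero => simp
    | succ n ih =>
      rw [Finset.sum_range_succ, ← ih]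
      have hcast : ((n + 1 : ℕ) : ZMod k) = (n : ZMod k) + 1 := by push_cast; ring
      rw [hcast, ← add_assoc]
      simp only [he_def]
      ring
  have hS : ∀ n : ℕ, cross (e i) (v (i + (n : ZMod k)) - v i) = ∑ t ∈ Finset.range n, d t := by
    intro n; rw [hv n, p18_cross_sum]
  have hStotal : ∑ t ∈ Finset.range k, d t = 0 := by
    rw [← hS k, ZMod.natCast_self, add_zero, sub_self, p18_cross_zero]
  -- the index n
  set n : ℕ := (j - i).val with hn_def
  have hnk : n < k := ZMod.val_lt _
  have hncast : ((n : ℕ) : ZMod k) = j - i := ZMod.natCast_rightInverse _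
  have hn0 : n ≠ 0 := by
    intro h
    rw [h, Nat.cast_zero] at hncast
    exact hji (sub_eq_zero.mp hncast.symm)
  have hn1 : n ≠ 1 := by
    intro h
    rw [h, Nat.cast_one] at hncast
    exact hji1 ((eq_add_of_sub_eq hncast.symm).trans (add_comm 1 i))
  have hn2 : 2 ≤ n := by omega
  -- rewrite goal
  have h5 : i + ((n : ℕ) : ZMod k) = j := by rw [hncast]; ring
  have hgoal : cross (v (i + 1) - v i) (v j - v i) = ∑ t ∈ Finset.range n, d t := by
    rw [← hS n, h5]
  rw [hgoal]
  -- positivity of partial sums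
  have hα1 : α 1 = θ (i + ((0 : ℕ) : ZMod k) + 1) := by
    simp [hα_def]
  have hα1pos : 0 < α 1 := by rw [hα1]; exact hθpos _
  have hαpos : ∀ t : ℕ, 1 ≤ t → 0 < α t := fun t ht =>
    lt_of_lt_of_le hα1pos (hmono.monotone ht)
  have hα1lt : α 1 < Real.pi := by rw [hα1]; exact hθlt _
  have hαlt : ∀ t : ℕ, t ≤ k - 1 → α t < 2 * Real.pi := by
    intro t ht
    calc α t ≤ α (k - 1) := hmono.monotone ht
    _ = 2 * Real.pi - θ i := hαtop
    _ < 2 * Real.pi := by linarith [hθpos i]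
  by_cases hcase : α (n - 1) ≤ Real.pi
  · -- all increments in range n are nonneg, and d 1 > 0
    apply Finset.sum_pos'
    · intro t ht
      rw [Finset.mem_range] at ht
      obtain ⟨c, hc, hdt⟩ := hd t
      rcases Nat.eq_zero_or_pos t with h0 | h1
      · rw [hdt, h0, hα0]; simp
      · rw [hdt]
        apply mul_nonneg hc.le
        apply Real.sin_nonneg_of_nonneg_of_le_pi (hαpos t h1).le
        calc α t ≤ α (n - 1) := hmono.monotone (by omega)
        _ ≤ Real.pi := hcase
    · refine ⟨1, Finset.mem_range.mpr (by omega), ?_⟩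
      obtain ⟨c, hc, hdt⟩ := hd 1
      rw [hdt]
      exact mul_pos hc (Real.sin_pos_of_pos_of_lt_pi hα1pos hα1lt)
  · push_neg at hcase
    -- tail increments are negative
    have htail : ∀ t ∈ Finset.Ico n k, d t < 0 := by
      intro t ht
      rw [Finset.mem_Ico] at ht
      obtain ⟨c, hc, hdt⟩ := hd t
      rw [hdt]
      have h1 : Real.pi < α t := lt_of_lt_of_le hcase (hmono.monotone (by omega))
      have h2 : α t < 2 * Real.pi := hαlt t (by omega)
      have hsin : Real.sin (α t) < 0 := by
        have := Real.sin_pos_of_pos_of_lt_pi (x := α t - Real.pi) (by linarith) (by linarith)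
        rw [Real.sin_sub_pi] at this
        linarith
      exact mul_neg_of_pos_of_neg hc hsin
    have hsplit : ∑ t ∈ Finset.range n, d t + ∑ t ∈ Finset.Ico n k, d t
        = ∑ t ∈ Finset.range k, d t := by
      rw [Finset.range_eq_Ico, Finset.range_eq_Ico]
      exact Finset.sum_Ico_consecutive _ (Nat.zero_le n) hnk.le
    have hneg : ∑ t ∈ Finset.Ico n k, d t < 0 := by
      have hne' : (Finset.Ico n k).Nonempty := ⟨n, Finset.mem_Ico.mpr ⟨le_rfl, hnk⟩⟩
      calc ∑ t ∈ Finset.Ico n k, d t < ∑ _t ∈ Finset.Ico n k, (0 : ℝ) :=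
        Finset.sum_lt_sum_of_nonempty hne' htail
      _ = 0 := by simp
    linarith [hStotal, hsplit, hneg]

/-- A closed polygonal curve whose turning angle at every vertex is strictly positive
(a left turn, strictly between 0° and 180°) and whose total turning is exactly 360°
is the boundary of a strictly convex polygon: it is simple (edges meet only at shared
endpoints) and every vertex lies strictly to the left of every directed edge. -/
theorem stmt_18 {k : ℕ} [NeZero k] (hk : 3 ≤ k) (v : ZMod k → ℂ)
    (hne : ∀ i : ZMod k, v (i + 1) ≠ v i)
    (hpos : ∀ i : ZMod k, 0 < Complex.arg ((v (i + 1) - v i) / (v i - v (i - 1))))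
    (hlt : ∀ i : ZMod k, Complex.arg ((v (i + 1) - v i) / (v i - v (i - 1))) ≠ Real.pi)
    (hsum : ∑ i : ZMod k, Complex.arg ((v (i + 1) - v i) / (v i - v (i - 1))) =
      2 * Real.pi) :
    Function.Injective v ∧
    (∀ i j : ZMod k, j ≠ i → j ≠ i + 1 → 0 < cross (v (i + 1) - v i) (v j - v i)) ∧
    (∀ i j : ZMod k, i ≠ j →
      segment ℝ (v i) (v (i + 1)) ∩ segment ℝ (v j) (v (j + 1)) ⊆
        ({v i, v (i + 1)} : Set ℂ) ∩ ({v j, v (j + 1)} : Set ℂ)) := by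
  have key := p18_key hk v hne hpos hlt hsum
  have h1 : (1 : ZMod k) ≠ 0 := by
    intro h
    have hd : (k : ℕ) ∣ 1 := (ZMod.natCast_eq_zero_iff 1 k).mp (by exact_mod_cast h)
    have := Nat.le_of_dvd (by norm_num) hd
    omega
  have h2 : (2 : ZMod k) ≠ 0 := by
    intro h
    have hd : (k : ℕ) ∣ 2 := (ZMod.natCast_eq_zero_iff 2 k).mp (by exact_mod_cast h)
    have := Nat.le_of_dvd (by norm_num) hd
    omega
  have hinj : Function.Injective v := by
    intro a b hab
    by_contra hne'
    have hba : b ≠ a := fun h => hne' h.symm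
    by_cases hb1 : b = a + 1
    · exact hne a (by rw [← hb1, hab])
    · have := key a b hba hb1
      rw [hab, sub_self, p18_cross_zero] at this
      exact lt_irrefl 0 this
  refine ⟨hinj, key, ?_⟩
  intro i j hij x hx
  obtain ⟨hxi, hxj⟩ := hx
  obtain ⟨s, t, hs, ht, hst, hxeq⟩ := hxi
  have hLaffine : ∀ (a b : ℂ) (s t : ℝ), s + t = 1 →
      cross (v (i + 1) - v i) (s • a + t • b - v i)
      = s * cross (v (i + 1) - v i) (a - v i) + t * cross (v (i + 1) - v i) (b - v i) := by
    intro a b s t hst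
    have hst' : (s : ℂ) + (t : ℂ) = 1 := by exact_mod_cast hst
    have hrw : s • a + t • b - v i = s • (a - v i) + t • (b - v i) := by
      simp only [Complex.real_smul]
      linear_combination (v i) * hst'
    rw [hrw, p18_cross_add, p18_cross_smul, p18_cross_smul]
  have hL0 : cross (v (i + 1) - v i) (x - v i) = 0 := by
    rw [← hxeq, hLaffine _ _ _ _ hst]
    rw [sub_self, p18_cross_zero, p18_cross_self]
    ring
  obtain ⟨s', t', hs', ht', hst', hxeq'⟩ := hxj
  have hLj : cross (v (i + 1) - v i) (x - v i)
      = s' * cross (v (i + 1) - v i) (v j - v i)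
      + t' * cross (v (i + 1) - v i) (v (j + 1) - v i) := by
    rw [← hxeq', hLaffine _ _ _ _ hst']
  by_cases hB : j = i + 1
  · -- x must equal v (i + 1)
    have hj1 : j + 1 ≠ i := by
      rw [hB]; intro h; exact h2 (by linear_combination h)
    have hj1' : j + 1 ≠ i + 1 := by
      rw [hB]; intro h; exact h1 (by linear_combination h)
    have hA : 0 < cross (v (i + 1) - v i) (v (j + 1) - v i) := key i (j + 1) hj1 hj1'
    have hLvj : cross (v (i + 1) - v i) (v j - v i) = 0 := by
      rw [hB]; exact p18_cross_self _
    rw [hL0, hLvj] at hLj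
    have ht'0 : t' = 0 := by
      by_contra ht'0
      have hpos' : 0 < t' := lt_of_le_of_ne ht' (Ne.symm ht'0)
      nlinarith [mul_pos hpos' hA]
    have hs'1 : s' = 1 := by linarith
    have hxv : x = v j := by
      rw [← hxeq', ht'0, hs'1]; simp
    constructor
    · simp [hxv, hB]
    · simp [hxv]
  · by_cases hC : j + 1 = i
    · -- x must equal v i
      have hjne : j ≠ i := fun h => hij h.symm
      have hA : 0 < cross (v (i + 1) - v i) (v j - v i) := key i j hjne hB
      have hLvj1 : cross (v (i + 1) - v i) (v (j + 1) - v i) = 0 := by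
        rw [hC, sub_self, p18_cross_zero]
      rw [hL0, hLvj1] at hLj
      have hs'0 : s' = 0 := by
        by_contra hs'0
        have hpos' : 0 < s' := lt_of_le_of_ne hs' (Ne.symm hs'0)
        nlinarith [mul_pos hpos' hA]
      have ht'1 : t' = 1 := by linarith
      have hxv : x = v (j + 1) := by
        rw [← hxeq', hs'0, ht'1]; simp
      constructor
      · simp [hxv, hC]
      · simp [hxv]
    · exfalso
      have hjne : j ≠ i := fun h => hij h.symm
      have hA : 0 < cross (v (i + 1) - v i) (v j - v i) := key i j hjne hB
      have hj1i1 : j + 1 ≠ i + 1 := fun h => hjne (add_right_cancel h)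
      have hA' : 0 < cross (v (i + 1) - v i) (v (j + 1) - v i) := key i (j + 1) hC hj1i1
      rw [hL0] at hLj
      by_cases hs0 : s' = 0
      · rw [hs0] at hLj hst'
        have ht1 : t' = 1 := by linarith
        rw [ht1] at hLj
        linarith
      · have hsp : 0 < s' := lt_of_le_of_ne hs' (Ne.symm hs0)
        nlinarith [mul_pos hsp hA, mul_nonneg ht' hA'.le]
end

section
/- If a connected graph G is the state transition graph of a medium, then the map sending each state to the set of tokens used in some consistent message from a fixed base state gives an isometric embedding of G into a hypercube; that is, every medium's state transition graph is a partial cube. -/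
/-- Applying a message (list of tokens) to a state. -/
def applyMsg {State Token : Type*} (act : Token → State → State) : State → List Token → State
  | S, [] => S
  | S, t :: w => applyMsg act (act t S) w

/-- A message is stepwise effective for a state if each successive token changes the
current state. -/
def StepwiseEffective {State Token : Type*} (act : Token → State → State) :
    State → List Token → Prop
  | _, [] => True
  | S, t :: w => act t S ≠ S ∧ StepwiseEffective act (act t S) w

/-- A message is consistent if it does not contain both a token and its reverse. -/
def Consistent {Token : Type*} (rev : Token → Token) (w : List Token) : Prop :=
  ∀ t ∈ w, rev t ∉ w

/-- A medium: a finite set of states acted on by tokens, satisfying the four medium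
axioms (unique reverse tokens; consistent stepwise-effective connectivity; the
return-iff-balanced axiom; concatenation consistency). -/
structure Medium (State Token : Type*) [Finite State] [DecidableEq Token] where
  act : Token → State → State
  rev : Token → Token
  rev_spec : ∀ t (S Q : State), S ≠ Q → (act t S = Q ↔ act (rev t) Q = S)
  rev_unique : ∀ t t', (∀ S Q : State, S ≠ Q → (act t S = Q ↔ act t' Q = S)) → t' = rev t
  conn : ∀ S Q : State, S ≠ Q →
    ∃ w, applyMsg act S w = Q ∧ StepwiseEffective act S w ∧ Consistent rev w
  balance : ∀ (S : State) (w : List Token), StepwiseEffective act S w →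
    (applyMsg act S w = S ↔ ∀ t, w.count t = w.count (rev t))
  concat : ∀ (S Q : State) (w z : List Token), applyMsg act S w = applyMsg act Q z →
    StepwiseEffective act S w → StepwiseEffective act Q z →
    Consistent rev w → Consistent rev z → Consistent rev (w ++ z)

namespace Stmt19Aux

variable {State Token : Type*}

theorem applyMsg_append (act : Token → State → State) (S : State) (w z : List Token) :
    applyMsg act S (w ++ z) = applyMsg act (applyMsg act S w) z := by
  induction w generalizing S with
  | nil => rfl
  | cons t w ih => simp [applyMsg, ih]

theorem se_append {act : Token → State → State} {S : State} {w z : List Token}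
    (hw : StepwiseEffective act S w) (hz : StepwiseEffective act (applyMsg act S w) z) :
    StepwiseEffective act S (w ++ z) := by
  induction w generalizing S with
  | nil => exact hz
  | cons t w ih => exact ⟨hw.1, ih hw.2 hz⟩

theorem se_append_left {act : Token → State → State} {S : State} {w z : List Token}
    (h : StepwiseEffective act S (w ++ z)) : StepwiseEffective act S w := by
  induction w generalizing S with
  | nil => trivial
  | cons t w ih => exact ⟨h.1, ih h.2⟩

theorem se_append_right {act : Token → State → State} {S : State} {w z : List Token}
    (h : StepwiseEffective act S (w ++ z)) : StepwiseEffective act (applyMsg act S w) z := by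
  induction w generalizing S with
  | nil => exact h
  | cons t w ih => exact ih h.2

theorem consistent_mono {rev : Token → Token} {w z : List Token}
    (hsub : ∀ t, t ∈ z → t ∈ w) (hw : Consistent rev w) : Consistent rev z :=
  fun t ht hrt => hw t (hsub t ht) (hsub _ hrt)

end Stmt19Aux

namespace Stmt19Aux

section Med
variable {State Token : Type*} [Finite State] [DecidableEq Token] (M : Medium State Token)

theorem rev_rev (t : Token) : M.rev (M.rev t) = t :=
  (M.rev_unique (M.rev t) t fun S Q hSQ => (M.rev_spec t Q S (Ne.symm hSQ)).symm).symm

theorem rev_injective : Function.Injective M.rev :=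
  Function.Involutive.injective (rev_rev M)

/-- Reverse of a message. -/
def revMsg (w : List Token) : List Token := (w.reverse).map M.rev

theorem mem_revMsg {t : Token} {w : List Token} : t ∈ revMsg M w ↔ M.rev t ∈ w := by
  simp only [revMsg, List.mem_map, List.mem_reverse]
  constructor
  · rintro ⟨s, hs, rfl⟩; rwa [rev_rev]
  · intro h; exact ⟨M.rev t, h, rev_rev M t⟩

theorem count_revMsg (t : Token) (w : List Token) :
    (revMsg M w).count t = w.count (M.rev t) := by
  have : (revMsg M w).count (M.rev (M.rev t)) = w.count (M.rev t) := by
    rw [revMsg, List.count_map_of_injective _ _ (rev_injective M), List.count_reverse]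
  rwa [rev_rev] at this

theorem consistent_revMsg {w : List Token} (hw : Consistent M.rev w) :
    Consistent M.rev (revMsg M w) := by
  intro t ht hrt
  rw [mem_revMsg] at ht hrt
  exact hw t (by rwa [rev_rev] at hrt) ht

theorem revMsg_spec : ∀ (w : List Token) (S : State), StepwiseEffective M.act S w →
    applyMsg M.act (applyMsg M.act S w) (revMsg M w) = S ∧
      StepwiseEffective M.act (applyMsg M.act S w) (revMsg M w) := by
  intro w
  induction w with
  | nil => intro S _; exact ⟨rfl, trivial⟩
  | cons t w ih =>
    intro S hse
    obtain ⟨hts, hse'⟩ := hse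
    obtain ⟨ih1, ih2⟩ := ih (M.act t S) hse'
    have hrm : revMsg M (t :: w) = revMsg M w ++ [M.rev t] := by
      simp [revMsg]
    have hstep : M.act (M.rev t) (M.act t S) = S :=
      (M.rev_spec t S (M.act t S) (Ne.symm hts)).mp rfl
    have happ : applyMsg M.act (applyMsg M.act S (t :: w)) (revMsg M (t :: w)) = S := by
      rw [hrm, applyMsg_append]
      show applyMsg M.act (applyMsg M.act (applyMsg M.act (M.act t S) w) (revMsg M w)) [M.rev t] = S
      rw [ih1]
      exact hstep
    refine ⟨happ, ?_⟩
    rw [hrm]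
    refine se_append ih2 ?_
    show StepwiseEffective M.act (applyMsg M.act (applyMsg M.act (M.act t S) w) (revMsg M w)) [M.rev t]
    rw [ih1]
    exact ⟨by rw [hstep]; exact Ne.symm hts, trivial⟩

/-- counts of two stepwise-effective messages with the same endpoints agree up to reversal. -/
theorem counts_balance {S Y : State} {w z : List Token}
    (hw : StepwiseEffective M.act S w) (hz : StepwiseEffective M.act S z)
    (hwY : applyMsg M.act S w = Y) (hzY : applyMsg M.act S z = Y) (t : Token) :
    w.count t + z.count (M.rev t) = w.count (M.rev t) + z.count t := by
  obtain ⟨hz1, hz2⟩ := revMsg_spec M z S hz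
  rw [hzY] at hz1 hz2
  have hse : StepwiseEffective M.act S (w ++ revMsg M z) :=
    se_append hw (by rw [hwY]; exact hz2)
  have hret : applyMsg M.act S (w ++ revMsg M z) = S := by
    rw [applyMsg_append, hwY]; exact hz1
  have hb := ((M.balance S _ hse).mp hret) t
  rw [List.count_append, List.count_append, count_revMsg, count_revMsg, rev_rev] at hb
  exact hb

/-- A token effective somewhere is not its own reverse. -/
theorem rev_ne_self {S : State} {t : Token} (h : M.act t S ≠ S) : M.rev t ≠ t := by
  intro heq
  set Q := M.act t S with hQ
  have hSQ : S ≠ Q := Ne.symm h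
  obtain ⟨w, hw1, hw2, _⟩ := M.conn S Q hSQ
  have hQt : M.act t Q = S := by
    have := (M.rev_spec t S Q hSQ).mp hQ.symm
    rwa [heq] at this
  have hse' : StepwiseEffective M.act S (w ++ [t]) := by
    refine se_append hw2 ?_
    rw [hw1]
    exact ⟨by rw [hQt]; exact hSQ, trivial⟩
  have hret : applyMsg M.act S (w ++ [t]) = S := by
    rw [applyMsg_append, hw1]; exact hQt
  have hb := (M.balance S _ hse').mp hret
  have hwbal : ∀ s, w.count s = w.count (M.rev s) := by
    intro s
    have := hb s
    simp only [List.count_append] at this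
    by_cases hst : s = t
    · subst hst
      rw [heq]
    · have h1 : M.rev s ≠ t := by
        intro hc; apply hst
        exact rev_injective M (by rw [hc, heq])
      rw [List.count_eq_zero_of_not_mem (by simp [hst] : s ∉ [t]),
        List.count_eq_zero_of_not_mem (by simp [h1] : M.rev s ∉ [t])] at this
      omega
  have := (M.balance S w hw2).mpr hwbal
  rw [hw1] at this
  exact hSQ this.symm

/-- Any two consistent stepwise-effective messages between the same states have the
same counts. -/
theorem counts_unique {S Y : State} {w z : List Token}
    (hw : StepwiseEffective M.act S w) (hz : StepwiseEffective M.act S z)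
    (hwY : applyMsg M.act S w = Y) (hzY : applyMsg M.act S z = Y)
    (hwc : Consistent M.rev w) (hzc : Consistent M.rev z) (t : Token) :
    w.count t = z.count t := by
  have hcat : Consistent M.rev (w ++ z) :=
    M.concat S S w z (hwY.trans hzY.symm) hw hz hwc hzc
  have hb := counts_balance M hw hz hwY hzY t
  by_cases hmw : t ∈ w
  · have h1 : M.rev t ∉ w := hwc t hmw
    have h2 : M.rev t ∉ z := fun hc => hcat t (by simp [hmw]) (by simp [hc])
    rw [List.count_eq_zero_of_not_mem h1, List.count_eq_zero_of_not_mem h2] at hb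
    omega
  · by_cases hmz : t ∈ z
    · have h2 : M.rev t ∉ z := hzc t hmz
      have h1 : M.rev t ∉ w := fun hc => hcat t (by simp [hmz]) (by simp [hc])
      rw [List.count_eq_zero_of_not_mem h1, List.count_eq_zero_of_not_mem h2] at hb
      omega
    · rw [List.count_eq_zero_of_not_mem hmw, List.count_eq_zero_of_not_mem hmz]

end Med
end Stmt19Aux

namespace Stmt19Aux
section Med2
variable {State Token : Type*} [Finite State] [DecidableEq Token] (M : Medium State Token)

/-- Key lemma: a token used by a consistent message into `u` cannot be used again by a
consistent message out of `u`. -/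
theorem key {X u : State} {m n : List Token} {t : Token}
    (hm1 : applyMsg M.act X m = u) (hm2 : StepwiseEffective M.act X m)
    (hm3 : Consistent M.rev m) (hn2 : StepwiseEffective M.act u n)
    (hn3 : Consistent M.rev n) (htm : t ∈ m) (htn : t ∈ n) : False := by
  obtain ⟨m1, m2, rfl⟩ := List.append_of_mem htm
  obtain ⟨n1, n2, rfl⟩ := List.append_of_mem htn
  have hseA : StepwiseEffective M.act (applyMsg M.act X m1) (t :: m2) := se_append_right hm2
  have hu : applyMsg M.act (applyMsg M.act X m1) (t :: m2) = u := by
    rw [← applyMsg_append]; exact hm1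
  have hsen1 : StepwiseEffective M.act u n1 := se_append_left hn2
  have hsetP : StepwiseEffective M.act (applyMsg M.act u n1) (t :: n2) := se_append_right hn2
  have htP : M.act t (applyMsg M.act u n1) ≠ applyMsg M.act u n1 := hsetP.1
  have hback : M.act (M.rev t) (M.act t (applyMsg M.act u n1)) = applyMsg M.act u n1 :=
    (M.rev_spec t (applyMsg M.act u n1) _ (Ne.symm htP)).mp rfl
  obtain ⟨hrev1, hrev2⟩ := revMsg_spec M n1 u hsen1
  set P := applyMsg M.act u n1 with hP
  set R := M.act t P with hR
  have hz1 : applyMsg M.act R (M.rev t :: revMsg M n1) = u := by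
    show applyMsg M.act (M.act (M.rev t) R) (revMsg M n1) = u
    rw [hback]; exact hrev1
  have hz2 : StepwiseEffective M.act R (M.rev t :: revMsg M n1) := by
    refine ⟨?_, ?_⟩
    · rw [hback]; exact Ne.symm htP
    · rw [hback]; exact hrev2
  have hrevt_n1 : M.rev t ∉ n1 := fun hc => hn3 t htn (by simp [hc])
  have hz3 : Consistent M.rev (M.rev t :: revMsg M n1) := by
    intro s hs hrs
    rcases List.mem_cons.mp hs with rfl | hs'
    · rw [rev_rev] at hrs
      rcases List.mem_cons.mp hrs with h1 | h2
      · exact rev_ne_self M htP h1.symm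
      · exact hrevt_n1 ((mem_revMsg M).mp h2)
    · have hsn1 : M.rev s ∈ n1 := (mem_revMsg M).mp hs'
      rcases List.mem_cons.mp hrs with h1 | h2
      · rw [h1] at hsn1; exact hrevt_n1 hsn1
      · have hsn1' : s ∈ n1 := by
          have := (mem_revMsg M).mp h2; rwa [rev_rev] at this
        exact hn3 s (by simp [hsn1']) (by simp [hsn1])
  have hconsw1 : Consistent M.rev (t :: m2) :=
    consistent_mono (fun s hs => by simp at hs ⊢; tauto) hm3
  have hcat := M.concat _ _ _ _ (hu.trans hz1.symm) hseA hz2 hconsw1 hz3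
  exact hcat t (by simp) (by simp)

/-- Consistent stepwise-effective messages have no repeated tokens. -/
theorem count_le_one {X : State} {w : List Token} (hse : StepwiseEffective M.act X w)
    (hc : Consistent M.rev w) (t : Token) : w.count t ≤ 1 := by
  by_contra h
  push_neg at h
  have htw : t ∈ w := by
    rw [← List.count_pos_iff]; omega
  obtain ⟨a, b, rfl⟩ := List.append_of_mem htw
  have hcnt : a.count t + (t :: b).count t ≥ 2 := by
    rw [← List.count_append]; omega
  rw [List.count_cons_self] at hcnt
  by_cases hta : t ∈ a
  · exact key M rfl (se_append_left hse) (consistent_mono (fun s hs => by simp [hs]) hc)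
      (se_append_right hse) (consistent_mono (fun s hs => by simp at hs ⊢; tauto) hc) hta
      List.mem_cons_self
  · have htb : t ∈ b := by
      rw [← List.count_pos_iff]
      have : a.count t = 0 := List.count_eq_zero_of_not_mem hta
      omega
    have hw' : a ++ t :: b = (a ++ [t]) ++ b := by simp
    rw [hw'] at hse hc
    exact key M rfl (se_append_left hse)
      (consistent_mono (fun s hs => by
        simp only [List.mem_append, List.mem_singleton, List.mem_cons] at hs ⊢; tauto) hc)
      (se_append_right hse)
      (consistent_mono (fun s hs => by
        simp only [List.mem_append, List.mem_singleton, List.mem_cons] at hs ⊢; tauto) hc)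
      (by simp) htb

theorem msg_nodup {X : State} {w : List Token} (hse : StepwiseEffective M.act X w)
    (hc : Consistent M.rev w) : w.Nodup :=
  List.nodup_iff_count_le_one.mpr (count_le_one M hse hc)

/-- Canonical consistent message between two states. -/
noncomputable def msg (M : Medium State Token) (X Y : State) : List Token :=
  letI := Classical.decEq State
  if h : X = Y then [] else (M.conn X Y h).choose

theorem msg_spec (X Y : State) : applyMsg M.act X (msg M X Y) = Y ∧
    StepwiseEffective M.act X (msg M X Y) ∧ Consistent M.rev (msg M X Y) := by
  unfold msg
  split_ifs with h
  · exact ⟨h ▸ rfl, trivial, fun t ht => absurd ht List.not_mem_nil⟩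
  · exact (M.conn X Y h).choose_spec

/-- Signed count invariant. -/
noncomputable def d (M : Medium State Token) (X Y : State) (t : Token) : ℤ :=
  ((msg M X Y).count t : ℤ) - (msg M X Y).count (M.rev t)

theorem d_eq {X Y : State} {w : List Token} (hw : applyMsg M.act X w = Y)
    (hse : StepwiseEffective M.act X w) (hc : Consistent M.rev w) (t : Token) :
    d M X Y t = (w.count t : ℤ) - w.count (M.rev t) := by
  obtain ⟨h1, h2, h3⟩ := msg_spec M X Y
  have e1 := counts_unique M hse h2 hw h1 hc h3 t
  have e2 := counts_unique M hse h2 hw h1 hc h3 (M.rev t)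
  unfold d
  omega

theorem d_cocycle (X Y Z : State) (t : Token) : d M X Z t = d M X Y t + d M Y Z t := by
  obtain ⟨hxy1, hxy2, _⟩ := msg_spec M X Y
  obtain ⟨hyz1, hyz2, _⟩ := msg_spec M Y Z
  obtain ⟨hxz1, hxz2, _⟩ := msg_spec M X Z
  have hse : StepwiseEffective M.act X (msg M X Y ++ msg M Y Z) :=
    se_append hxy2 (by rw [hxy1]; exact hyz2)
  have happ : applyMsg M.act X (msg M X Y ++ msg M Y Z) = Z := by
    rw [applyMsg_append, hxy1]; exact hyz1
  have hb := counts_balance M hse hxz2 happ hxz1 t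
  rw [List.count_append, List.count_append] at hb
  unfold d
  omega

theorem d_rev (X Y : State) (t : Token) : d M X Y (M.rev t) = - d M X Y t := by
  unfold d
  rw [rev_rev]
  ring

theorem mem_msg_iff (X Y : State) (t : Token) : t ∈ msg M X Y ↔ d M X Y t = 1 := by
  obtain ⟨h1, h2, h3⟩ := msg_spec M X Y
  constructor
  · intro ht
    have hpos : 0 < (msg M X Y).count t := List.count_pos_iff.mpr ht
    have hle := count_le_one M h2 h3 t
    have hz : (msg M X Y).count (M.rev t) = 0 := List.count_eq_zero_of_not_mem (h3 t ht)
    unfold d; omega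
  · intro hd
    by_contra hnm
    have hz : (msg M X Y).count t = 0 := List.count_eq_zero_of_not_mem hnm
    unfold d at hd
    omega

theorem rev_mem_msg_iff (X Y : State) (t : Token) : M.rev t ∈ msg M X Y ↔ d M X Y t = -1 := by
  rw [mem_msg_iff, d_rev]
  omega

theorem d_cases (X Y : State) (t : Token) : d M X Y t = 1 ∨ d M X Y t = 0 ∨ d M X Y t = -1 := by
  by_cases h1 : t ∈ msg M X Y
  · exact Or.inl ((mem_msg_iff M X Y t).mp h1)
  · by_cases h2 : M.rev t ∈ msg M X Y
    · exact Or.inr (Or.inr ((rev_mem_msg_iff M X Y t).mp h2))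
    · refine Or.inr (Or.inl ?_)
      unfold d
      rw [List.count_eq_zero_of_not_mem h1, List.count_eq_zero_of_not_mem h2]
      ring

end Med2
end Stmt19Aux

set_option linter.unusedSectionVars false
namespace Stmt19Aux
section Final
variable {State Token : Type*} [Finite State] [DecidableEq Token] [Fintype Token]
variable (M : Medium State Token) (S0 : State) (f : State → Token → Bool)
variable (hf : ∀ (S : State) (t : Token), f S t = true ↔
      ∃ w, applyMsg M.act S0 w = S ∧ StepwiseEffective M.act S0 w ∧
        Consistent M.rev w ∧ t ∈ w)

include hf in
theorem f_iff (S : State) (t : Token) : f S t = true ↔ d M S0 S t = 1 := by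
  obtain ⟨h1, h2, h3⟩ := msg_spec M S0 S
  rw [hf, ← mem_msg_iff]
  constructor
  · rintro ⟨w, hw1, hw2, hw3, htw⟩
    have := counts_unique M hw2 h2 hw1 h1 hw3 h3 t
    rw [← List.count_pos_iff] at htw ⊢
    omega
  · intro ht
    exact ⟨msg M S0 S, h1, h2, h3, ht⟩

theorem d_ne_one {u v : State} {t : Token} (ht : t ∈ msg M u v) : d M S0 u t ≠ 1 := by
  intro h1
  have hmem : t ∈ msg M S0 u := (mem_msg_iff M S0 u t).mpr h1
  obtain ⟨a1, a2, a3⟩ := msg_spec M S0 u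
  obtain ⟨b1, b2, b3⟩ := msg_spec M u v
  exact key M a1 a2 a3 b2 b3 hmem ht

include hf in
theorem differ_iff (u v : State) (t : Token) :
    (f u t ≠ f v t) ↔ (t ∈ msg M u v ∧ d M S0 u t = 0) ∨
      (M.rev t ∈ msg M u v ∧ d M S0 u t = 1) := by
  have hu := f_iff M S0 f hf u t
  have hv := f_iff M S0 f hf v t
  have hbool : (f u t ≠ f v t) ↔ ¬(f u t = true ↔ f v t = true) := by
    cases (f u t) <;> cases (f v t) <;> simp
  rw [hbool, hu, hv, mem_msg_iff, rev_mem_msg_iff, d_cocycle M S0 u v t]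
  have h1 := d_cases M S0 u t
  have h2 := d_cases M u v t
  have h3 : d M u v t = 1 → d M S0 u t ≠ 1 :=
    fun h => d_ne_one M S0 ((mem_msg_iff M u v t).mpr h)
  have h4 : d M u v t = -1 → d M S0 u t ≠ -1 := by
    intro h hc
    have := d_ne_one M S0 ((rev_mem_msg_iff M u v t).mpr h)
    rw [d_rev] at this
    omega
  omega

include hf in
theorem hamming_eq (u v : State) : hammingDist (f u) (f v) = (msg M u v).length := by
  obtain ⟨h1, h2, h3⟩ := msg_spec M u v
  have hnd : (msg M u v).Nodup := msg_nodup M h2 h3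
  rw [← List.toFinset_card_of_nodup hnd]
  have hdm : ∀ a ∈ msg M u v, d M S0 u a = 0 ∨ d M S0 u a = -1 := by
    intro a ha
    have := d_ne_one M S0 ha
    have := d_cases M S0 u a
    omega
  rw [show hammingDist (f u) (f v) = (Finset.univ.filter fun t => f u t ≠ f v t).card from rfl]
  refine Eq.symm (Finset.card_bij (fun a _ => if d M S0 u a = 0 then a else M.rev a) ?_ ?_ ?_)
  · intro a ha
    rw [List.mem_toFinset] at ha
    rw [Finset.mem_filter]
    refine ⟨Finset.mem_univ _, ?_⟩
    beta_reduce
    rcases hdm a ha with h0 | hm1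
    · rw [if_pos h0, differ_iff M S0 f hf]
      exact Or.inl ⟨ha, h0⟩
    · rw [if_neg (by omega), differ_iff M S0 f hf]
      refine Or.inr ⟨by rwa [rev_rev], by rw [d_rev]; omega⟩
  · intro a1 ha1 a2 ha2 heq
    rw [List.mem_toFinset] at ha1 ha2
    beta_reduce at heq
    split_ifs at heq with e1 e2 e3
    · exact heq
    · exfalso
      have : d M S0 u a1 = - d M S0 u a2 := by rw [heq, d_rev]
      rcases hdm a2 ha2 with h | h <;> omega
    · exfalso
      have : d M S0 u a2 = - d M S0 u a1 := by rw [← heq, d_rev]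
      rcases hdm a1 ha1 with h | h <;> omega
    · exact rev_injective M heq
  · intro b hb
    rw [Finset.mem_filter] at hb
    rw [differ_iff M S0 f hf] at hb
    rcases hb.2 with ⟨hbm, hb0⟩ | ⟨hbm, hb1⟩
    · exact ⟨b, List.mem_toFinset.mpr hbm, by beta_reduce; rw [if_pos hb0]⟩
    · refine ⟨M.rev b, List.mem_toFinset.mpr hbm, ?_⟩
      beta_reduce
      rw [if_neg (by rw [d_rev]; omega), rev_rev]

theorem exists_walk : ∀ (w : List Token) (X : State), StepwiseEffective M.act X w →
    ∃ p : (SimpleGraph.fromRel fun S Q : State => ∃ t : Token, M.act t S = Q).Walk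
      X (applyMsg M.act X w), p.length = w.length := by
  intro w
  induction w with
  | nil => intro X _; exact ⟨SimpleGraph.Walk.nil, rfl⟩
  | cons t w ih =>
    intro X hse
    obtain ⟨p, hp⟩ := ih (M.act t X) hse.2
    have hadj : (SimpleGraph.fromRel fun S Q : State => ∃ t : Token, M.act t S = Q).Adj
        X (M.act t X) := by
      rw [SimpleGraph.fromRel_adj]
      exact ⟨Ne.symm hse.1, Or.inl ⟨t, rfl⟩⟩
    exact ⟨SimpleGraph.Walk.cons hadj p, by show p.length + 1 = (t :: w).length; rw [hp]; rfl⟩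

theorem len_msg_eq {X Y : State} {w : List Token} (hw1 : applyMsg M.act X w = Y)
    (hw2 : StepwiseEffective M.act X w) (hw3 : Consistent M.rev w) :
    (msg M X Y).length = w.length := by
  obtain ⟨h1, h2, h3⟩ := msg_spec M X Y
  have hndm : (msg M X Y).Nodup := msg_nodup M h2 h3
  have hndw : w.Nodup := msg_nodup M hw2 hw3
  rw [← List.toFinset_card_of_nodup hndm, ← List.toFinset_card_of_nodup hndw]
  congr 1
  ext a
  rw [List.mem_toFinset, List.mem_toFinset, ← List.count_pos_iff, ← List.count_pos_iff,
    counts_unique M hw2 h2 hw1 h1 hw3 h3 a]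

include hf in
theorem adj_hamming {S Q : State}
    (hadj : (SimpleGraph.fromRel fun S Q : State => ∃ t : Token, M.act t S = Q).Adj S Q) :
    hammingDist (f S) (f Q) = 1 := by
  rw [SimpleGraph.fromRel_adj] at hadj
  obtain ⟨hne, h⟩ := hadj
  have key : ∀ A B : State, A ≠ B → (∃ t : Token, M.act t A = B) →
      hammingDist (f A) (f B) = 1 := by
    intro A B hAB ⟨t, ht⟩
    have heff : M.act t A ≠ A := by rw [ht]; exact Ne.symm hAB
    have hcons : Consistent M.rev [t] := by
      intro s hs
      simp only [List.mem_singleton] at hs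
      subst hs
      simp only [List.mem_singleton]
      exact rev_ne_self M heff
    have hse : StepwiseEffective M.act A [t] := ⟨heff, trivial⟩
    rw [hamming_eq M S0 f hf A B, len_msg_eq M (by simpa [applyMsg] using ht) hse hcons]
    rfl
  rcases h with h | h
  · exact key S Q hne h
  · rw [hammingDist_comm]
    exact key Q S (Ne.symm hne) h

include hf in
theorem hamming_le_walk {u v : State}
    (p : (SimpleGraph.fromRel fun S Q : State => ∃ t : Token, M.act t S = Q).Walk u v) :
    hammingDist (f u) (f v) ≤ p.length := by
  induction p with
  | nil => simp [hammingDist_self]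
  | @cons a b c h q ih =>
    have hadj := adj_hamming M S0 f hf h
    have htri := hammingDist_triangle (f a) (f b) (f c)
    simp only [SimpleGraph.Walk.length_cons]
    omega

end Final
end Stmt19Aux

/-- The state transition graph of a medium is a partial cube: fixing a base state `S0`,
the map assigning to each state `S` the 0/1 vector recording, for each token `t`,
whether some consistent stepwise-effective message from `S0` to `S` uses `t`, is an
isometric embedding of the state transition graph into a hypercube. -/
theorem stmt_19 {State Token : Type*} [Finite State] [DecidableEq Token]
    [Fintype Token] (M : Medium State Token)
    (hconn : (SimpleGraph.fromRel fun S Q : State => ∃ t : Token, M.act t S = Q).Connected)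
    (S0 : State) (f : State → Token → Bool)
    (hf : ∀ (S : State) (t : Token), f S t = true ↔
      ∃ w, applyMsg M.act S0 w = S ∧ StepwiseEffective M.act S0 w ∧
        Consistent M.rev w ∧ t ∈ w) :
    ∀ u v : State,
      (SimpleGraph.fromRel fun S Q : State => ∃ t : Token, M.act t S = Q).dist u v =
        hammingDist (f u) (f v) := by
  intro u v
  obtain ⟨h1, h2, h3⟩ := Stmt19Aux.msg_spec M u v
  apply le_antisymm
  · rw [Stmt19Aux.hamming_eq M S0 f hf u v]
    obtain ⟨q, hq⟩ := Stmt19Aux.exists_walk M (Stmt19Aux.msg M u v) u h2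
    calc (SimpleGraph.fromRel fun S Q : State => ∃ t : Token, M.act t S = Q).dist u v
        ≤ (q.copy rfl h1).length := SimpleGraph.dist_le _
      _ = q.length := SimpleGraph.Walk.length_copy _ _ _
      _ = (Stmt19Aux.msg M u v).length := hq
  · obtain ⟨p, hp⟩ := (hconn.preconnected u v).exists_walk_length_eq_dist
    have := Stmt19Aux.hamming_le_walk M S0 f hf p
    rwa [hp] at this
end
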